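/- arXiv:1005.5542 — 5 statements merged into one kernel-verified Lean document; each statement's English description precedes it below -/
import Mathlib

section
/- A topological group G contains a closed copy of the Arens space S₂ if and only if G contains a closed copy of the sequential fan S_ω. -/
/-- The convergent sequence `C₀ = {(0,0)} ∪ {(1/n, 0) : n ≥ 1}`. -/
def arensC0 : Set (ℝ × ℝ) :=
  {(0, 0)} ∪ {p | ∃ n : ℕ, 0 < n ∧ p = (1 / (n : ℝ), 0)}

/-- The convergent sequence `Cₙ = {(1/n, 0)} ∪ {(1/n, 1/(nm)) : m ≥ 1}`. -/
def arensC (n : ℕ) : Set (ℝ × ℝ) :=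
  {(1 / (n : ℝ), 0)} ∪ {p | ∃ m : ℕ, 0 < m ∧ p = (1 / (n : ℝ), 1 / ((n : ℝ) * (m : ℝ)))}

/-- The underlying set of the Arens space `S₂`. -/
def arensCarrier : Set (ℝ × ℝ) :=
  arensC0 ∪ ⋃ n ∈ {n : ℕ | 0 < n}, arensC n

/-- The Arens space `S₂` as a type. -/
def ArensS2 : Type := ↥arensCarrier

/-- The convergent sequences indexing the inductive topology of `S₂`. -/
def arensSeq : Option {n : ℕ // 0 < n} → Set (ℝ × ℝ)
  | none => arensC0
  | some n => arensC n.val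

/-- The Arens topology: the strongest (final/inductive) topology inducing the planar
topology on each of the convergent sequences `C₀, C₁, C₂, …`. -/
instance : TopologicalSpace ArensS2 :=
  ⨆ i : Option {n : ℕ // 0 < n},
    TopologicalSpace.coinduced
      (fun x : {x : ArensS2 // Subtype.val x ∈ arensSeq i} => x.val)
      (TopologicalSpace.induced
        (fun x : {x : ArensS2 // Subtype.val x ∈ arensSeq i} => Subtype.val (Subtype.val x))
        inferInstance)

/-- Identify all the points of the convergent sequence `C₀` in `S₂`. -/
def arensSetoid : Setoid ArensS2 where
  r x y := x = y ∨ (Subtype.val x ∈ arensC0 ∧ Subtype.val y ∈ arensC0)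
  iseqv := by
    refine ⟨fun x => Or.inl rfl, ?_, ?_⟩
    · rintro x y (rfl | ⟨h1, h2⟩)
      · exact Or.inl rfl
      · exact Or.inr ⟨h2, h1⟩
    · rintro x y z (rfl | ⟨h1, h2⟩) (rfl | ⟨h3, h4⟩)
      · exact Or.inl rfl
      · exact Or.inr ⟨h3, h4⟩
      · exact Or.inr ⟨h1, h2⟩
      · exact Or.inr ⟨h1, h4⟩

/-- The sequential fan `S_ω`, the quotient of `S₂` collapsing `C₀` to a point,
with the quotient topology. -/
def SeqFanSω : Type := Quotient arensSetoid

instance : TopologicalSpace SeqFanSω :=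
  instTopologicalSpaceQuotient


open Topology Filter Set Function

section Seq
variable {X : Type*} [TopologicalSpace X] [T2Space X]

/-- points of an injective convergent sequence are isolated. -/
lemma isolated_of_tendsto {c : ℕ → X} {l : X} (hc : Function.Injective c)
    (hl : Tendsto c atTop (𝓝 l)) (hnl : ∀ m, c m ≠ l) (m : ℕ) :
    ∃ U : Set X, IsOpen U ∧ c m ∈ U ∧ l ∉ U ∧ ∀ m', c m' ∈ U → m' = m := by
  obtain ⟨U, V, hU, hV, hcm, hlV, hUV⟩ := t2_separation (hnl m)
  obtain ⟨M, hM⟩ := eventually_atTop.1 (hl (hV.mem_nhds hlV))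
  have hF : (c '' {m' | m' < M ∧ m' ≠ m}).Finite :=
    Set.Finite.image _ ((Set.finite_Iio M).subset (fun x hx => hx.1))
  refine ⟨U \ (c '' {m' | m' < M ∧ m' ≠ m}), hU.sdiff hF.isClosed, ⟨hcm, ?_⟩, fun h => ?_, ?_⟩
  · rintro ⟨m', ⟨_, hne⟩, he⟩; exact hne (hc he)
  · exact Set.not_disjoint_iff.2 ⟨l, h.1, hlV⟩ hUV
  · rintro m' ⟨hm'U, hm'F⟩
    by_contra hne
    rcases lt_or_ge m' M with h | h
    · exact hm'F ⟨m', ⟨h, hne⟩, rfl⟩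
    · exact Set.disjoint_left.1 hUV hm'U (hM m' h)

/-- trace characterization of relatively open subsets of an injective convergent
sequence together with its limit. -/
lemma exists_open_trace {c : ℕ → X} {l : X} (hc : Function.Injective c)
    (hl : Tendsto c atTop (𝓝 l)) (hnl : ∀ m, c m ≠ l) {T : Set X}
    (hT : T ⊆ insert l (Set.range c)) :
    (∃ V, IsOpen V ∧ V ∩ insert l (Set.range c) = T) ↔
      (l ∈ T → ∀ᶠ m in atTop, c m ∈ T) := by
  constructor
  · rintro ⟨V, hV, rfl⟩ hlT
    filter_upwards [hl (hV.mem_nhds hlT.1)] with m hm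
    exact ⟨hm, Set.mem_insert_of_mem _ ⟨m, rfl⟩⟩
  · intro h
    by_cases hlT : l ∈ T
    · obtain ⟨M, hM⟩ := eventually_atTop.1 (h hlT)
      refine ⟨(c '' {m | m < M ∧ c m ∉ T})ᶜ, ?_, ?_⟩
      · exact (Set.Finite.isClosed ((Set.finite_Iio M).subset (fun x hx => hx.1) |>.image c)).isOpen_compl
      · ext q
        constructor
        · rintro ⟨hq, (rfl | ⟨m, rfl⟩)⟩
          · exact hlT
          · by_contra hqT
            rcases lt_or_ge m M with h' | h'
            · exact hq ⟨m, ⟨h', hqT⟩, rfl⟩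
            · exact hqT (hM m h')
        · intro hq
          refine ⟨?_, hT hq⟩
          rintro ⟨m, ⟨_, hmT⟩, rfl⟩
          exact hmT hq
    · choose U hUo hUc hUl hUu using isolated_of_tendsto hc hl hnl
      refine ⟨⋃ m ∈ {m | c m ∈ T}, U m, isOpen_biUnion fun m _ => hUo m, ?_⟩
      ext q
      constructor
      · rintro ⟨hq, hq'⟩
        simp only [Set.mem_iUnion] at hq
        obtain ⟨m, hmT, hqU⟩ := hq
        rcases hq' with rfl | ⟨m', rfl⟩
        · exact absurd hqU (hUl m)
        · rwa [hUu m _ hqU]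
      · intro hq
        rcases hT hq with rfl | ⟨m, rfl⟩
        · exact absurd hq hlT
        · exact ⟨Set.mem_biUnion hq (hUc m), Set.mem_insert_of_mem _ ⟨m, rfl⟩⟩

end Seq

section Points
set_option maxRecDepth 4000

/-- coordinates of the point `a = (0,0)` -/
def aC : ℝ × ℝ := (0, 0)

/-- coordinates of the point `b n = (1/(n+1), 0)` -/
noncomputable def bC (n : ℕ) : ℝ × ℝ := (1 / ((n : ℝ) + 1), 0)

/-- coordinates of the point `p n m = (1/(n+1), 1/((n+1)(m+1)))` -/
noncomputable def pC (n m : ℕ) : ℝ × ℝ := (1 / ((n : ℝ) + 1), 1 / (((n : ℝ) + 1) * ((m : ℝ) + 1)))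

lemma nat_inv_pos (n : ℕ) : (0 : ℝ) < 1 / ((n : ℝ) + 1) := by positivity

lemma nat_inv_inj {n k : ℕ} (h : 1 / ((n : ℝ) + 1) = 1 / ((k : ℝ) + 1)) : n = k := by
  have hn : ((n : ℝ) + 1) ≠ 0 := by positivity
  have hk : ((k : ℝ) + 1) ≠ 0 := by positivity
  field_simp at h
  exact_mod_cast (by linarith : (n : ℝ) = k)

lemma bC_injective : Function.Injective bC := by
  intro n k h
  exact nat_inv_inj (congrArg Prod.fst h)

lemma pC_fst_snd {n m n' m' : ℕ} (h : pC n m = pC n' m') : n = n' ∧ m = m' := by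
  have h1 := congrArg Prod.fst h
  have h2 := congrArg Prod.snd h
  simp only [pC] at h1 h2
  have hn := nat_inv_inj h1
  subst hn
  refine ⟨rfl, ?_⟩
  have hn0 : ((n : ℝ) + 1) ≠ 0 := by positivity
  have hm : ((m : ℝ) + 1) ≠ 0 := by positivity
  have hm' : ((m' : ℝ) + 1) ≠ 0 := by positivity
  field_simp at h2
  exact_mod_cast (by linarith : (m : ℝ) = m')

lemma pC_injective (n : ℕ) : Function.Injective (pC n) := fun m m' h => (pC_fst_snd h).2

lemma pC_ne_bC (n m k : ℕ) : pC n m ≠ bC k := by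
  intro h
  have h2 := congrArg Prod.snd h
  simp only [pC, bC] at h2
  exact absurd h2 (by positivity)

lemma pC_ne_aC (n m : ℕ) : pC n m ≠ aC := by
  intro h
  have h2 := congrArg Prod.snd h
  simp only [pC, aC] at h2
  exact absurd h2 (by positivity)

lemma bC_ne_aC (n : ℕ) : bC n ≠ aC := by
  intro h
  have h1 := congrArg Prod.fst h
  simp only [bC, aC] at h1
  exact absurd h1 (by positivity)

lemma arensC0_eq : arensC0 = insert aC (Set.range bC) := by
  ext q
  unfold arensC0
  simp only [Set.mem_union, Set.mem_singleton_iff, Set.mem_setOf_eq, Set.mem_insert_iff,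
    Set.mem_range]
  constructor
  · rintro (rfl | ⟨n, hn, rfl⟩)
    · exact Or.inl rfl
    · refine Or.inr ⟨n - 1, ?_⟩
      have h1 : ((n - 1 : ℕ) : ℝ) + 1 = (n : ℝ) := by
        have h2 : n - 1 + 1 = n := by omega
        calc ((n - 1 : ℕ) : ℝ) + 1 = ((n - 1 + 1 : ℕ) : ℝ) := by push_cast; ring
        _ = (n : ℝ) := by rw [h2]
      unfold bC
      rw [h1]
  · rintro (rfl | ⟨n, rfl⟩)
    · exact Or.inl rfl
    · refine Or.inr ⟨n + 1, Nat.succ_pos n, ?_⟩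
      unfold bC
      push_cast
      ring_nf

lemma arensC_succ_eq (n : ℕ) : arensC (n + 1) = insert (bC n) (Set.range (pC n)) := by
  ext q
  unfold arensC
  simp only [Set.mem_union, Set.mem_singleton_iff, Set.mem_setOf_eq, Set.mem_insert_iff,
    Set.mem_range]
  have hcast : (((n : ℕ) + 1 : ℕ) : ℝ) = (n : ℝ) + 1 := by push_cast; ring
  rw [hcast]
  constructor
  · rintro (rfl | ⟨m, hm, rfl⟩)
    · exact Or.inl (by unfold bC; rfl)
    · refine Or.inr ⟨m - 1, ?_⟩
      have h1 : ((m - 1 : ℕ) : ℝ) + 1 = (m : ℝ) := by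
        have h2 : m - 1 + 1 = m := by omega
        calc ((m - 1 : ℕ) : ℝ) + 1 = ((m - 1 + 1 : ℕ) : ℝ) := by push_cast; ring
        _ = (m : ℝ) := by rw [h2]
      unfold pC
      rw [h1]
  · rintro (rfl | ⟨m, rfl⟩)
    · exact Or.inl (by unfold bC; rfl)
    · refine Or.inr ⟨m + 1, Nat.succ_pos m, ?_⟩
      unfold pC
      push_cast
      ring_nf

lemma arensCarrier_eq : arensCarrier = arensC0 ∪ ⋃ n, arensC (n + 1) := by
  unfold arensCarrier
  congr 1
  ext q
  simp only [Set.mem_iUnion, Set.mem_setOf_eq, exists_prop]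
  constructor
  · rintro ⟨n, hn, hq⟩
    have h2 : n - 1 + 1 = n := by omega
    exact ⟨n - 1, by rwa [h2]⟩
  · rintro ⟨n, hq⟩
    exact ⟨n + 1, Nat.succ_pos n, hq⟩

lemma aC_mem : aC ∈ arensCarrier := by
  rw [arensCarrier_eq, arensC0_eq]; exact Or.inl (Set.mem_insert _ _)

lemma bC_mem (n : ℕ) : bC n ∈ arensCarrier := by
  rw [arensCarrier_eq, arensC0_eq]; exact Or.inl (Set.mem_insert_of_mem _ ⟨n, rfl⟩)

lemma pC_mem (n m : ℕ) : pC n m ∈ arensCarrier := by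
  rw [arensCarrier_eq]
  refine Or.inr (Set.mem_iUnion.2 ⟨n, ?_⟩)
  rw [arensC_succ_eq]
  exact Set.mem_insert_of_mem _ ⟨m, rfl⟩

/-- The point `a` of the Arens space. -/
def aP : ArensS2 := ⟨aC, aC_mem⟩

/-- The point `b n` of the Arens space. -/
noncomputable def bP (n : ℕ) : ArensS2 := ⟨bC n, bC_mem n⟩

/-- The point `p n m` of the Arens space. -/
noncomputable def pP (n m : ℕ) : ArensS2 := ⟨pC n m, pC_mem n m⟩

lemma aP_val : (Subtype.val (aP : { x // x ∈ arensCarrier }) : ℝ × ℝ) = aC := rfl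
lemma bP_val (n : ℕ) : (Subtype.val (bP n : { x // x ∈ arensCarrier }) : ℝ × ℝ) = bC n := rfl

lemma bP_injective : Function.Injective bP := by
  intro n k h
  exact bC_injective (congrArg Subtype.val h)

lemma pP_fst_snd {n m n' m' : ℕ} (h : pP n m = pP n' m') : n = n' ∧ m = m' :=
  pC_fst_snd (congrArg Subtype.val h)

lemma pP_ne_bP (n m k : ℕ) : pP n m ≠ bP k := fun h => pC_ne_bC n m k (congrArg Subtype.val h)
lemma pP_ne_aP (n m : ℕ) : pP n m ≠ aP := fun h => pC_ne_aC n m (congrArg Subtype.val h)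
lemma bP_ne_aP (n : ℕ) : bP n ≠ aP := fun h => bC_ne_aC n (congrArg Subtype.val h)

lemma arens_classify (x : ArensS2) :
    x = aP ∨ (∃ n, x = bP n) ∨ ∃ n m, x = pP n m := by
  obtain ⟨q, hq⟩ := x
  rw [arensCarrier_eq] at hq
  rcases hq with hq | hq
  · rw [arensC0_eq] at hq
    rcases hq with rfl | ⟨n, rfl⟩
    · exact Or.inl rfl
    · exact Or.inr (Or.inl ⟨n, rfl⟩)
  · obtain ⟨n, hq⟩ := Set.mem_iUnion.1 hq
    rw [arensC_succ_eq] at hq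
    rcases hq with rfl | ⟨m, rfl⟩
    · exact Or.inr (Or.inl ⟨n, rfl⟩)
    · exact Or.inr (Or.inr ⟨n, m, rfl⟩)

end Points

section Master

lemma tendsto_bC : Filter.Tendsto bC atTop (𝓝 aC) := by
  have h1 : Filter.Tendsto (fun n : ℕ => 1 / ((n : ℝ) + 1)) atTop (𝓝 0) :=
    tendsto_one_div_add_atTop_nhds_zero_nat
  have := Filter.Tendsto.prodMk_nhds h1 (tendsto_const_nhds (x := (0 : ℝ)))
  exact this

lemma tendsto_pC (n : ℕ) : Filter.Tendsto (pC n) atTop (𝓝 (bC n)) := by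
  have h1 : Filter.Tendsto (fun m : ℕ => 1 / (((n : ℝ) + 1) * ((m : ℝ) + 1))) atTop (𝓝 0) := by
    have h2 : Filter.Tendsto (fun m : ℕ => (1 / ((n : ℝ) + 1)) * (1 / ((m : ℝ) + 1))) atTop
        (𝓝 ((1 / ((n : ℝ) + 1)) * 0)) :=
      (tendsto_one_div_add_atTop_nhds_zero_nat).const_mul _
    rw [mul_zero] at h2
    convert h2 using 2 with m
    rw [one_div_mul_one_div]
  exact Filter.Tendsto.prodMk_nhds tendsto_const_nhds h1

/-- the topology induced on a subtype slice, expressed through traces in the plane -/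
lemma arens_trace_iff {S : Set (ℝ × ℝ)} (hS : S ⊆ arensCarrier) {U : Set ArensS2} :
    (∃ V : Set (ℝ × ℝ), IsOpen V ∧
      (fun x : {x : ArensS2 // Subtype.val x ∈ S} => Subtype.val (Subtype.val x)) ⁻¹' V =
      (fun x : {x : ArensS2 // Subtype.val x ∈ S} => x.val) ⁻¹' U) ↔
    (∃ V : Set (ℝ × ℝ), IsOpen V ∧
      V ∩ S = Subtype.val '' {x : ArensS2 | x ∈ U ∧ Subtype.val x ∈ S}) := by
  constructor
  · rintro ⟨V, hV, hVU⟩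
    refine ⟨V, hV, ?_⟩
    ext q
    constructor
    · rintro ⟨hqV, hqS⟩
      by_cases hqc : q ∈ arensCarrier
      · have hx : (⟨⟨q, hqc⟩, hqS⟩ : {x : ArensS2 // Subtype.val x ∈ S}) ∈
            (fun x : {x : ArensS2 // Subtype.val x ∈ S} =>
              Subtype.val (Subtype.val x)) ⁻¹' V := hqV
        rw [hVU] at hx
        exact ⟨⟨q, hqc⟩, ⟨hx, hqS⟩, rfl⟩
      · exact absurd (hS hqS) hqc
    · rintro ⟨x, ⟨hxU, hxS⟩, rfl⟩
      have hx : (⟨x, hxS⟩ : {x : ArensS2 // Subtype.val x ∈ S}) ∈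
          (fun x : {x : ArensS2 // Subtype.val x ∈ S} => x.val) ⁻¹' U := hxU
      rw [← hVU] at hx
      exact ⟨hx, hxS⟩
  · rintro ⟨V, hV, hVU⟩
    refine ⟨V, hV, ?_⟩
    ext ⟨⟨q, hqc⟩, hqS⟩
    simp only [Set.mem_preimage]
    constructor
    · intro hqV
      have : q ∈ V ∩ S := ⟨hqV, hqS⟩
      rw [hVU] at this
      obtain ⟨x, ⟨hxU, _⟩, hxq⟩ := this
      have : x = ⟨q, hqc⟩ := Subtype.ext hxq
      rwa [← this]
    · intro hU
      have : q ∈ V ∩ S := by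
        rw [hVU]
        exact ⟨⟨q, hqc⟩, ⟨hU, hqS⟩, rfl⟩
      exact this.1


/-- membership translation for the trace set -/
lemma mem_trace_set {S : Set (ℝ × ℝ)} {U : Set ArensS2} {q : ℝ × ℝ} (hq : q ∈ arensCarrier)
    (hqS : q ∈ S) :
    q ∈ Subtype.val '' {x : ArensS2 | x ∈ U ∧ Subtype.val x ∈ S} ↔ (⟨q, hq⟩ : ArensS2) ∈ U := by
  constructor
  · rintro ⟨x, ⟨hxU, _⟩, rfl⟩
    exact hxU
  · intro h
    exact ⟨⟨q, hq⟩, ⟨h, hqS⟩, rfl⟩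

lemma arensSeq_subset_carrier (i : Option {n : ℕ // 0 < n}) : arensSeq i ⊆ arensCarrier := by
  cases i with
  | none =>
    intro q hq
    exact Set.mem_union_left _ hq
  | some k =>
    intro q hq
    refine Set.mem_union_right _ ?_
    simp only [Set.mem_iUnion, Set.mem_setOf_eq, exists_prop]
    exact ⟨k.val, k.prop, hq⟩

/-- The master description of open sets of the Arens space. -/
lemma isOpen_arens_iff {U : Set ArensS2} :
    IsOpen U ↔ (aP ∈ U → ∀ᶠ n in atTop, bP n ∈ U) ∧
      ∀ n, bP n ∈ U → ∀ᶠ m in atTop, pP n m ∈ U := by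
  have hrw : IsOpen U ↔ ∀ i : Option {n : ℕ // 0 < n},
      IsOpen[TopologicalSpace.coinduced
        (fun x : {x : ArensS2 // Subtype.val x ∈ arensSeq i} => x.val)
        (TopologicalSpace.induced
          (fun x : {x : ArensS2 // Subtype.val x ∈ arensSeq i} => Subtype.val (Subtype.val x))
          inferInstance)] U := isOpen_iSup_iff
  rw [hrw]
  have hsplit : ∀ i : Option {n : ℕ // 0 < n},
      (IsOpen[TopologicalSpace.coinduced
        (fun x : {x : ArensS2 // Subtype.val x ∈ arensSeq i} => x.val)
        (TopologicalSpace.induced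
          (fun x : {x : ArensS2 // Subtype.val x ∈ arensSeq i} => Subtype.val (Subtype.val x))
          inferInstance)] U) ↔
      (∃ V : Set (ℝ × ℝ), IsOpen V ∧ V ∩ arensSeq i =
        Subtype.val '' {x : ArensS2 | x ∈ U ∧ Subtype.val x ∈ arensSeq i}) := by
    intro i
    rw [isOpen_coinduced, isOpen_induced_iff]
    exact arens_trace_iff (arensSeq_subset_carrier i)
  simp only [hsplit]
  constructor
  · intro h
    constructor
    · intro haU
      obtain ⟨V, hV, hVt⟩ := h none
      have h0 : arensSeq none = insert aC (Set.range bC) := arensC0_eq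
      rw [h0] at hVt
      have := (exists_open_trace bC_injective tendsto_bC bC_ne_aC
        (by rw [← hVt]; exact Set.inter_subset_right)).1 ⟨V, hV, hVt⟩
      rw [mem_trace_set aC_mem (Set.mem_insert _ _)] at this
      · have := this haU
        filter_upwards [this] with n hn
        rw [mem_trace_set (bC_mem n) (Set.mem_insert_of_mem _ (Set.mem_range_self n))] at hn
        exact hn
    · intro n hbU
      obtain ⟨V, hV, hVt⟩ := h (some ⟨n + 1, Nat.succ_pos n⟩)
      have h0 : arensSeq (some ⟨n + 1, Nat.succ_pos n⟩) = insert (bC n) (Set.range (pC n)) :=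
        arensC_succ_eq n
      rw [h0] at hVt
      have := (exists_open_trace (pC_injective n) (tendsto_pC n) (fun m => pC_ne_bC n m n)
        (by rw [← hVt]; exact Set.inter_subset_right)).1 ⟨V, hV, hVt⟩
      rw [mem_trace_set (bC_mem n) (Set.mem_insert _ _)] at this
      have := this hbU
      filter_upwards [this] with m hm
      rw [mem_trace_set (pC_mem n m) (Set.mem_insert_of_mem _ (Set.mem_range_self m))] at hm
      exact hm
  · rintro ⟨ha, hb⟩ i
    cases i with
    | none =>
      have h0 : arensSeq none = insert aC (Set.range bC) := arensC0_eq
      rw [h0]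
      refine (exists_open_trace bC_injective tendsto_bC bC_ne_aC ?_).2 ?_
      · rintro q ⟨x, ⟨_, hxS⟩, rfl⟩
        exact hxS
      · intro hl
        rw [mem_trace_set aC_mem (Set.mem_insert _ _)] at hl
        filter_upwards [ha hl] with n hn
        rw [mem_trace_set (bC_mem n) (Set.mem_insert_of_mem _ (Set.mem_range_self n))]
        exact hn
    | some k =>
      obtain ⟨k, hk⟩ := k
      obtain ⟨n, rfl⟩ : ∃ n, k = n + 1 := ⟨k - 1, by omega⟩
      have h0 : arensSeq (some ⟨n + 1, hk⟩) = insert (bC n) (Set.range (pC n)) :=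
        arensC_succ_eq n
      rw [h0]
      refine (exists_open_trace (pC_injective n) (tendsto_pC n) (fun m => pC_ne_bC n m n) ?_).2 ?_
      · rintro q ⟨x, ⟨_, hxS⟩, rfl⟩
        exact hxS
      · intro hl
        rw [mem_trace_set (bC_mem n) (Set.mem_insert _ _)] at hl
        filter_upwards [hb n hl] with m hm
        rw [mem_trace_set (pC_mem n m) (Set.mem_insert_of_mem _ (Set.mem_range_self m))]
        exact hm

end Master

section ArensFacts

lemma isClosed_arens_iff {C : Set ArensS2} :
    IsClosed C ↔ (aP ∉ C → ∀ᶠ n in atTop, bP n ∉ C) ∧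
      ∀ n, bP n ∉ C → ∀ᶠ m in atTop, pP n m ∉ C := by
  rw [← isOpen_compl_iff, isOpen_arens_iff]
  simp only [Set.mem_compl_iff]

lemma eventually_ne_of_injective {f : ℕ → ArensS2} (hf : Function.Injective f) (x : ArensS2) :
    ∀ᶠ n in atTop, f n ≠ x := by
  by_cases h : ∃ k, f k = x
  · obtain ⟨k, rfl⟩ := h
    filter_upwards [eventually_gt_atTop k] with n hn he
    exact hn.ne' (hf he)
  · exact Filter.Eventually.of_forall fun n he => h ⟨n, he⟩

instance : T1Space ArensS2 := by
  constructor
  intro x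
  rw [isClosed_arens_iff]
  constructor
  · intro _
    exact eventually_ne_of_injective bP_injective x
  · intro n _
    exact eventually_ne_of_injective (fun m m' h => (pP_fst_snd h).2) x

lemma tendsto_bP : Filter.Tendsto bP atTop (𝓝 aP) := by
  rw [tendsto_nhds]
  intro U hU haU
  exact (isOpen_arens_iff.1 hU).1 haU

lemma tendsto_pP (n : ℕ) : Filter.Tendsto (pP n) atTop (𝓝 (bP n)) := by
  rw [tendsto_nhds]
  intro U hU hbU
  exact (isOpen_arens_iff.1 hU).2 n hbU

lemma continuous_arens_dom {X : Type*} [TopologicalSpace X] {F : ArensS2 → X}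
    (h0 : Filter.Tendsto (fun n => F (bP n)) atTop (𝓝 (F aP)))
    (h : ∀ n, Filter.Tendsto (fun m => F (pP n m)) atTop (𝓝 (F (bP n)))) :
    Continuous F := by
  rw [continuous_def]
  intro O hO
  rw [isOpen_arens_iff]
  exact ⟨fun ha => h0 (hO.mem_nhds ha), fun n hb => h n (hO.mem_nhds hb)⟩

end ArensFacts

section Fan

/-- The apex of the sequential fan. -/
def fanApex : SeqFanSω := Quotient.mk arensSetoid aP

/-- The point of the fan on spine `n` at position `m`. -/
noncomputable def fanP (n m : ℕ) : SeqFanSω := Quotient.mk arensSetoid (pP n m)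

lemma aP_mem_C0 : Subtype.val (aP : { x // x ∈ arensCarrier }) ∈ arensC0 := by
  rw [arensC0_eq]; exact Set.mem_insert _ _

lemma bP_mem_C0 (n : ℕ) : Subtype.val (bP n : { x // x ∈ arensCarrier }) ∈ arensC0 := by
  rw [arensC0_eq]; exact Set.mem_insert_of_mem _ (Set.mem_range_self n)

lemma pP_not_mem_C0 (n m : ℕ) : Subtype.val (pP n m : { x // x ∈ arensCarrier }) ∉ arensC0 := by
  rw [arensC0_eq]
  rintro (h | ⟨k, hk⟩)
  · exact pC_ne_aC n m h
  · exact pC_ne_bC n m k hk.symm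

lemma mk_bP (n : ℕ) : Quotient.mk arensSetoid (bP n) = fanApex :=
  Quotient.sound (Or.inr ⟨bP_mem_C0 n, aP_mem_C0⟩)

lemma mk_eq_fanApex {x : ArensS2} (hx : Subtype.val x ∈ arensC0) :
    Quotient.mk arensSetoid x = fanApex :=
  Quotient.sound (Or.inr ⟨hx, aP_mem_C0⟩)

lemma fanP_ne_apex (n m : ℕ) : fanP n m ≠ fanApex := by
  intro h
  rcases Quotient.exact h with h' | ⟨h', _⟩
  · exact pP_ne_aP n m h'
  · exact pP_not_mem_C0 n m h'

lemma fanP_inj {n m n' m' : ℕ} (h : fanP n m = fanP n' m') : n = n' ∧ m = m' := by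
  rcases Quotient.exact h with h' | ⟨h', _⟩
  · exact pP_fst_snd h'
  · exact absurd h' (pP_not_mem_C0 n m)

lemma fan_classify (z : SeqFanSω) : z = fanApex ∨ ∃ n m, z = fanP n m := by
  induction z using Quotient.ind with
  | _ x =>
    rcases arens_classify x with rfl | ⟨n, rfl⟩ | ⟨n, m, rfl⟩
    · exact Or.inl rfl
    · exact Or.inl (mk_bP n)
    · exact Or.inr ⟨n, m, rfl⟩

lemma isOpen_fan_iff {U : Set SeqFanSω} :
    IsOpen U ↔ (fanApex ∈ U → ∀ n, ∀ᶠ m in atTop, fanP n m ∈ U) := by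
  have h1 : IsOpen U ↔ IsOpen (Quotient.mk arensSetoid ⁻¹' U) := by
    constructor
    · intro h; exact h.preimage continuous_quotient_mk'
    · intro h; exact h
  rw [h1, isOpen_arens_iff]
  have hb : ∀ n, (bP n ∈ Quotient.mk arensSetoid ⁻¹' U) ↔ fanApex ∈ U := by
    intro n
    show (Quotient.mk arensSetoid (bP n) : SeqFanSω) ∈ U ↔ _
    rw [mk_bP]
    exact Iff.rfl
  have ha : (aP ∈ Quotient.mk arensSetoid ⁻¹' U) ↔ fanApex ∈ U := Iff.rfl
  constructor
  · rintro ⟨_, h2⟩ hap n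
    exact h2 n ((hb n).2 hap)
  · intro h
    refine ⟨fun hap => Filter.Eventually.of_forall fun n => (hb n).2 hap, fun n hbn => h ((hb n).1 hbn) n⟩

lemma isClosed_fan_iff {C : Set SeqFanSω} :
    IsClosed C ↔ (fanApex ∉ C → ∀ n, ∀ᶠ m in atTop, fanP n m ∉ C) := by
  rw [← isOpen_compl_iff, isOpen_fan_iff]
  simp only [Set.mem_compl_iff]

/-- every set containing the apex is closed in the fan -/
lemma isClosed_fan_of_apex_mem {C : Set SeqFanSω} (h : fanApex ∈ C) : IsClosed C :=
  isClosed_fan_iff.2 fun h' => absurd h h'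

instance : T1Space SeqFanSω := by
  constructor
  intro z
  rw [isClosed_fan_iff]
  intro hz n
  rcases fan_classify z with rfl | ⟨n', m', rfl⟩
  · exact absurd rfl hz
  · by_cases hn : n = n'
    · subst hn
      filter_upwards [eventually_gt_atTop m'] with m hm he
      exact hm.ne' (fanP_inj he).2
    · exact Filter.Eventually.of_forall fun m he => hn (fanP_inj he).1

lemma tendsto_fanP (n : ℕ) : Filter.Tendsto (fanP n) atTop (𝓝 fanApex) := by
  rw [tendsto_nhds]
  intro U hU haU
  exact (isOpen_fan_iff.1 hU) haU n

lemma continuous_fan_dom {X : Type*} [TopologicalSpace X] {F : SeqFanSω → X}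
    (h : ∀ n, Filter.Tendsto (fun m => F (fanP n m)) atTop (𝓝 (F fanApex))) :
    Continuous F := by
  rw [continuous_def]
  intro O hO
  rw [isOpen_fan_iff]
  exact fun ha n => h n (hO.mem_nhds ha)

end Fan

section Selection

/-- Generic greedy selection: thin out each spine so the resulting family of values is
injective and avoids a per-spine-finitely-bad set `A`. -/
lemma exists_selection {G : Type*} (v : ℕ → ℕ → G) (hv : ∀ n, Function.Injective (v n))
    (A : Set G) (hA : ∀ n, {t | v n t ∈ A}.Finite) :
    ∃ t : ℕ → ℕ → ℕ, (∀ n, StrictMono (t n)) ∧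
      (∀ n m n' m', v n (t n m) = v n' (t n' m') → (n, m) = (n', m')) ∧
      ∀ n m, v n (t n m) ∉ A := by
  classical
  -- the set of forbidden choices at step `k`, given previous choices `f j` for `j < k`
  set Bad : ℕ → (ℕ → ℕ) → Set ℕ := fun k f =>
    {t | v (Nat.unpair k).1 t ∈ A} ∪
      ⋃ j ∈ Finset.range k,
        ({t | v (Nat.unpair k).1 t = v (Nat.unpair j).1 (f j)} ∪
          {t | (Nat.unpair j).1 = (Nat.unpair k).1 ∧ t ≤ f j}) with hBad
  have hBadFin : ∀ k f, (Bad k f).Finite := by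
    intro k f
    refine (hA _).union (Set.Finite.biUnion (Finset.range k).finite_toSet ?_)
    intro j _
    refine Set.Finite.union ?_ ((Set.finite_Iic (f j)).subset fun t ht => ht.2)
    have hsub : {t | v (Nat.unpair k).1 t = v (Nat.unpair j).1 (f j)}.Subsingleton :=
      fun a ha b hb => hv _ (ha.trans hb.symm)
    exact hsub.finite
  have hpick : ∀ (k : ℕ) (f : ℕ → ℕ), ∃ tv, tv ∉ Bad k f :=
    fun k f => ((hBadFin k f).infinite_compl).nonempty
  choose pick hpickSpec using hpick
  -- accumulate choices
  set hfun : ℕ → ℕ → ℕ := fun k =>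
    Nat.rec (motive := fun _ => ℕ → ℕ) (fun _ => 0)
      (fun k ih => fun j => if j = k then pick k ih else ih j) k with hhfun
  set sel : ℕ → ℕ := fun k => pick k (hfun k) with hsel
  have hfun_succ : ∀ k j, hfun (k + 1) j = if j = k then sel k else hfun k j := by
    intro k j; rfl
  have hfun_eq : ∀ k j, j < k → hfun k j = sel j := by
    intro k
    induction k with
    | zero => intro j hj; omega
    | succ k ih =>
      intro j hj
      rw [hfun_succ]
      by_cases h : j = k
      · subst h; simp
      · rw [if_neg h]; exact ih j (by omega)
  -- Bad only depends on previous values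
  have hBad_congr : ∀ k f g, (∀ j, j < k → f j = g j) → Bad k f = Bad k g := by
    intro k f g hfg
    simp only [hBad]
    congr 1
    refine Set.iUnion_congr fun j => ?_
    by_cases hj : j ∈ Finset.range k
    · have := hfg j (Finset.mem_range.1 hj)
      rw [this]
    · simp [hj]
  have hsel_not_bad : ∀ k, sel k ∉ Bad k (fun j => sel j) := by
    intro k
    have h1 : sel k ∉ Bad k (hfun k) := hpickSpec k (hfun k)
    rwa [hBad_congr k (hfun k) (fun j => sel j) (hfun_eq k)] at h1
  refine ⟨fun n m => sel (Nat.pair n m), ?_, ?_, ?_⟩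
  · intro n m m' hmm'
    have hlt : Nat.pair n m < Nat.pair n m' := Nat.pair_lt_pair_right n hmm'
    have h1 := hsel_not_bad (Nat.pair n m')
    simp only [hBad, Set.mem_union, Set.mem_iUnion, Set.mem_setOf_eq, not_or, not_exists,
      not_and] at h1
    have h2 := (h1.2 (Nat.pair n m) (Finset.mem_range.2 hlt))
    simp only [Set.mem_union, Set.mem_setOf_eq, not_or, not_and, not_le] at h2
    have h3 := h2.2
    rw [Nat.unpair_pair, Nat.unpair_pair] at h3
    exact h3 rfl
  · intro n m n' m' heq
    by_contra hne
    have hkk : Nat.pair n m ≠ Nat.pair n' m' := by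
      intro h
      have h1 : (Nat.pair n m).unpair = (Nat.pair n' m').unpair := by rw [h]
      rw [Nat.unpair_pair, Nat.unpair_pair] at h1
      exact hne (by simpa using h1)
    rcases lt_or_gt_of_ne hkk with hlt | hlt
    · have h1 := hsel_not_bad (Nat.pair n' m')
      simp only [hBad, Set.mem_union, Set.mem_iUnion, Set.mem_setOf_eq, not_or, not_exists,
        not_and] at h1
      have h2 := h1.2 (Nat.pair n m) (Finset.mem_range.2 hlt)
      simp only [Set.mem_union, Set.mem_setOf_eq, not_or, not_and, not_le] at h2
      have h3 := h2.1
      rw [Nat.unpair_pair, Nat.unpair_pair] at h3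
      exact h3 heq.symm
    · have h1 := hsel_not_bad (Nat.pair n m)
      simp only [hBad, Set.mem_union, Set.mem_iUnion, Set.mem_setOf_eq, not_or, not_exists,
        not_and] at h1
      have h2 := h1.2 (Nat.pair n' m') (Finset.mem_range.2 hlt)
      simp only [Set.mem_union, Set.mem_setOf_eq, not_or, not_and, not_le] at h2
      have h3 := h2.1
      rw [Nat.unpair_pair, Nat.unpair_pair] at h3
      exact h3 heq
  · intro n m
    have h1 := hsel_not_bad (Nat.pair n m)
    simp only [hBad, Set.mem_union, Set.mem_iUnion, Set.mem_setOf_eq, not_or] at h1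
    have := h1.1
    rwa [Nat.unpair_pair] at this

end Selection

section ClosedFamilies

lemma eventually_not_mem_of_finite {s : Set ℕ} (hs : s.Finite) : ∀ᶠ m in atTop, m ∉ s := by
  obtain ⟨N, hN⟩ := hs.bddAbove
  filter_upwards [eventually_gt_atTop N] with m hm hmem
  exact absurd (hN hmem) (not_le.2 hm)

/-- tail sets are closed in the Arens space -/
lemma isClosed_arens_tail (N : ℕ) (T : Set (ℕ × ℕ)) :
    IsClosed ({aP} ∪ {x | ∃ n, N ≤ n ∧ x = bP n} ∪
      {x | ∃ nm : ℕ × ℕ, nm ∈ T ∧ N ≤ nm.1 ∧ x = pP nm.1 nm.2}) := by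
  rw [isClosed_arens_iff]
  constructor
  · intro ha
    exact absurd (Or.inl (Or.inl rfl)) ha
  · intro n hn
    refine Filter.Eventually.of_forall fun m hm => ?_
    rcases hm with (h | h) | h
    · exact pP_ne_aP n m h
    · obtain ⟨k, _, hk⟩ := h
      exact pP_ne_bP n m k hk
    · obtain ⟨nm, _, hN, hk⟩ := h
      have h1 := (pP_fst_snd hk).1
      exact hn (Or.inl (Or.inr ⟨n, by omega, rfl⟩))

/-- membership in all tails forces the point `aP` -/
lemma arens_tail_inter {x : ArensS2}
    (h : ∀ N, x ∈ ({aP} ∪ {x | ∃ n, N ≤ n ∧ x = bP n} ∪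
      {x | ∃ nm : ℕ × ℕ, nm ∈ (Set.univ : Set (ℕ × ℕ)) ∧ N ≤ nm.1 ∧ x = pP nm.1 nm.2})) :
    x = aP := by
  rcases arens_classify x with rfl | ⟨n, rfl⟩ | ⟨n, m, rfl⟩
  · rfl
  · rcases h (n + 1) with (h' | ⟨k, hk, h'⟩) | ⟨nm, _, hk, h'⟩
    · exact h'
    · have := bP_injective h'
      omega
    · exact absurd h' (by intro h''; exact pP_ne_bP nm.1 nm.2 n h''.symm)
  · rcases h (n + 1) with (h' | ⟨k, _, h'⟩) | ⟨nm, _, hk, h'⟩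
    · exact absurd h' (pP_ne_aP n m)
    · exact absurd h' (pP_ne_bP n m k)
    · have := (pP_fst_snd h').1
      omega

/-- spine subsets together with their limit point are closed in the Arens space -/
lemma isClosed_arens_spine (n : ℕ) (T : Set ℕ) :
    IsClosed ({bP n} ∪ {x | ∃ m ∈ T, x = pP n m}) := by
  rw [isClosed_arens_iff]
  constructor
  · intro _
    filter_upwards [eventually_gt_atTop n] with k hk hmem
    rcases hmem with h | ⟨m, _, h⟩
    · exact hk.ne' (bP_injective h)
    · exact pP_ne_bP n m k h.symm
  · intro k hk
    refine Filter.Eventually.of_forall fun m hm => ?_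
    rcases hm with h | ⟨m', _, h⟩
    · exact pP_ne_bP k m n h
    · have := (pP_fst_snd h).1
      subst this
      exact hk (Or.inl rfl)

/-- spine-finite sets of off-axis points are closed in the Arens space -/
lemma isClosed_arens_sparse (S : Set (ℕ × ℕ)) (h : ∀ n, {m | (n, m) ∈ S}.Finite) :
    IsClosed {x | ∃ nm ∈ S, x = pP nm.1 nm.2} := by
  rw [isClosed_arens_iff]
  constructor
  · intro _
    refine Filter.Eventually.of_forall fun k hmem => ?_
    obtain ⟨nm, _, hk⟩ := hmem
    exact pP_ne_bP nm.1 nm.2 k hk.symm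
  · intro n _
    have hfin : ((fun m => pP n m) ⁻¹' {x | ∃ nm ∈ S, x = pP nm.1 nm.2}).Finite := by
      refine Set.Finite.subset (h n) ?_
      intro m hm
      obtain ⟨nm, hnmS, hk⟩ := hm
      obtain ⟨h1, h2⟩ := pP_fst_snd hk
      simp only [Set.mem_setOf_eq]
      rw [h1, h2]
      exact hnmS
    filter_upwards [eventually_not_mem_of_finite hfin] with m hm
    exact hm

end ClosedFamilies

section Dir1

theorem arens_to_fan {G : Type*} [Group G] [TopologicalSpace G] [IsTopologicalGroup G]
    (h : ∃ e : ArensS2 → G, Topology.IsClosedEmbedding e) :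
    ∃ f : SeqFanSω → G, Topology.IsClosedEmbedding f := by
  classical
  obtain ⟨e, he⟩ := h
  set α : G := e aP with hα
  set β : ℕ → G := fun n => e (bP n) with hβ
  set χ : ℕ → ℕ → G := fun n u => e (pP n u) with hχ
  set v : ℕ → ℕ → G := fun n u => χ n u * (β n)⁻¹ * α with hv
  have hvinj : ∀ n, Function.Injective (v n) := by
    intro n u u' huu
    have h1 : χ n u = χ n u' := mul_right_cancel (mul_right_cancel huu)
    exact (pP_fst_snd (he.injective h1)).2
  obtain ⟨t, htmono, htinj, -⟩ := exists_selection v hvinj ∅ (fun n => by simp)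
  set q : ℕ → ℕ → G := fun n m => v n (t n m) with hq
  have hβlim : Filter.Tendsto β atTop (𝓝 α) := (he.continuous.tendsto aP).comp tendsto_bP
  have hχlim : ∀ n, Filter.Tendsto (fun m => χ n (t n m)) atTop (𝓝 (β n)) := fun n =>
    ((he.continuous.tendsto (bP n)).comp (tendsto_pP n)).comp (htmono n).tendsto_atTop
  have hqlim : ∀ n, Filter.Tendsto (q n) atTop (𝓝 α) := by
    intro n
    have h1 := ((hχlim n).mul_const (β n)⁻¹).mul_const α
    have h2 : β n * (β n)⁻¹ * α = α := by group
    rw [h2] at h1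
    exact h1
  have hqne : ∀ n m, q n m ≠ α := by
    intro n m hcon
    have h2 : χ n (t n m) * (β n)⁻¹ * α = β n * (β n)⁻¹ * α := by
      rw [show β n * (β n)⁻¹ * α = α by group]
      exact hcon
    have h1 : χ n (t n m) = β n := mul_right_cancel (mul_right_cancel h2)
    exact pP_ne_bP n (t n m) n (he.injective h1)
  have hgroup : ∀ n m, q n m * α⁻¹ * β n = χ n (t n m) := by
    intro n m
    show χ n (t n m) * (β n)⁻¹ * α * α⁻¹ * β n = χ n (t n m)
    group
  have hqassoc : ∀ n m, q n m = e (pP n (t n m)) * ((β n)⁻¹ * α) := by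
    intro n m
    show χ n (t n m) * (β n)⁻¹ * α = _
    rw [mul_assoc]
  -- the fan map
  set f0 : ArensS2 → G := fun x =>
    if h : ∃ nm : ℕ × ℕ, x = pP nm.1 nm.2 then q h.choose.1 h.choose.2 else α with hf0
  have hf0_pP : ∀ n m, f0 (pP n m) = q n m := by
    intro n m
    have hex : ∃ nm : ℕ × ℕ, pP n m = pP nm.1 nm.2 := ⟨(n, m), rfl⟩
    rw [hf0]
    simp only [dif_pos hex]
    have h1 := pP_fst_snd hex.choose_spec
    rw [← h1.1, ← h1.2]
  have hf0_C0 : ∀ x : ArensS2, Subtype.val x ∈ arensC0 → f0 x = α := by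
    intro x hx
    rw [hf0]
    simp only []
    rw [dif_neg]
    rintro ⟨nm, rfl⟩
    exact pP_not_mem_C0 nm.1 nm.2 hx
  set F : SeqFanSω → G := Quotient.lift f0 (by
    rintro x y (rfl | ⟨hx, hy⟩)
    · rfl
    · rw [hf0_C0 x hx, hf0_C0 y hy]) with hF
  have hFapex : F fanApex = α := hf0_C0 _ aP_mem_C0
  have hFp : ∀ n m, F (fanP n m) = q n m := fun n m => hf0_pP n m
  have hFcont : Continuous F := by
    apply continuous_fan_dom
    intro n
    simp only [hFp, hFapex]
    exact hqlim n
  have hFinj : Function.Injective F := by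
    intro z z' hzz
    rcases fan_classify z with rfl | ⟨n, m, rfl⟩ <;> rcases fan_classify z' with rfl | ⟨n', m', rfl⟩
    · rfl
    · rw [hFapex, hFp] at hzz
      exact absurd hzz.symm (hqne n' m')
    · rw [hFapex, hFp] at hzz
      exact absurd hzz (hqne n m)
    · rw [hFp, hFp] at hzz
      have h1 := htinj _ _ _ _ hzz
      rw [show n = n' from congrArg Prod.fst h1, show m = m' from congrArg Prod.snd h1]
  -- helper closedness facts
  have closed_pt : ∀ (x : ArensS2) (c : G), IsClosed {e x * c} := by
    intro x c
    have h1 : IsClosed (e '' {x}) := he.isClosedMap _ isClosed_singleton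
    rw [Set.image_singleton] at h1
    have h2 := (Homeomorph.mulRight c).isClosedMap _ h1
    rwa [Set.image_singleton, Homeomorph.coe_mulRight] at h2
  have closed_translate : ∀ (D : Set ArensS2) (c : G), IsClosed D →
      IsClosed ((fun g' => g' * c) '' (e '' D)) := by
    intro D c hD
    have h2 := (Homeomorph.mulRight c).isClosedMap _ (he.isClosedMap _ hD)
    rwa [Homeomorph.coe_mulRight] at h2
  have phi_trick : ∀ (g : G) (E : Set G), IsClosed E → g ∉ E →
      ∃ P, P ∈ 𝓝 g ∧ ∃ N' : ℕ, ∀ n, N' ≤ n → ∀ p, p ∈ P → p * α⁻¹ * β n ∉ E := by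
    intro g E hE hgE
    have hΦ : Continuous (fun p : G × G => p.1 * α⁻¹ * p.2) :=
      (continuous_fst.mul continuous_const).mul continuous_snd
    have h1 : Eᶜ ∈ 𝓝 ((fun p : G × G => p.1 * α⁻¹ * p.2) (g, α)) := by
      have hval : (fun p : G × G => p.1 * α⁻¹ * p.2) (g, α) = g := by
        show g * α⁻¹ * α = g
        group
      rw [hval]
      exact hE.isOpen_compl.mem_nhds hgE
    have h2 := hΦ.continuousAt.preimage_mem_nhds h1
    rw [mem_nhds_prod_iff] at h2
    obtain ⟨P, hP, B, hB, hPB⟩ := h2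
    obtain ⟨N', hN'⟩ := eventually_atTop.1 (hβlim.eventually_mem hB)
    refine ⟨P, hP, N', fun n hn p hp hmem => ?_⟩
    exact hPB (Set.mk_mem_prod hp (hN' n hn)) hmem
  -- tail sets
  set FS : ℕ → Set ArensS2 := fun N => {aP} ∪ {x | ∃ n, N ≤ n ∧ x = bP n} ∪
      {x | ∃ nm : ℕ × ℕ, nm ∈ (Set.univ : Set (ℕ × ℕ)) ∧ N ≤ nm.1 ∧ x = pP nm.1 nm.2} with hFS
  have hFSclosed : ∀ N, IsClosed (e '' FS N) := fun N =>
    he.isClosedMap _ (isClosed_arens_tail N _)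
  have hFSinter : ∀ g : G, (∀ N, g ∈ e '' FS N) → g = α := by
    intro g hg
    obtain ⟨x0, hx0, hgx⟩ := hg 0
    have hx : ∀ N, x0 ∈ FS N := by
      intro N
      obtain ⟨x1, hx1, hgx1⟩ := hg N
      have h1 : x1 = x0 := he.injective (by rw [hgx1, hgx])
      rwa [h1] at hx1
    rw [← hgx, arens_tail_inter hx]
  have hχmem : ∀ N n m, N ≤ n → χ n (t n m) ∈ e '' FS N := by
    intro N n m hn
    exact ⟨pP n (t n m), Or.inr ⟨(n, t n m), trivial, hn, rfl⟩, rfl⟩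
  -- K1 : arbitrary fan pieces together with the apex are closed
  have K1 : ∀ S : Set (ℕ × ℕ),
      IsClosed ({α} ∪ {x | ∃ nm ∈ S, x = q nm.1 nm.2}) := by
    intro S
    apply isClosed_of_closure_subset
    intro g hg
    by_contra hgT
    by_cases hall : ∀ N, g ∈ e '' FS N
    · exact hgT (Or.inl (hFSinter g hall))
    · push_neg at hall
      obtain ⟨N, hN⟩ := hall
      obtain ⟨P, hP, N', hPavoid⟩ := phi_trick g _ (hFSclosed N) hN
      set M := max N N' + 1 with hM
      set Cl : ℕ → Set G := fun n => (fun g' => g' * ((β n)⁻¹ * α)) ''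
        (e '' ({bP n} ∪ {x | ∃ m' ∈ {m' | (n, m') ∈ S}, x = pP n (t n m')})) with hCl
      have hClclosed : ∀ n, IsClosed (Cl n) := by
        intro n
        apply closed_translate
        have h1 : {x | ∃ m' ∈ {m' | (n, m') ∈ S}, x = pP n (t n m')} =
            {x | ∃ m ∈ t n '' {m' | (n, m') ∈ S}, x = pP n m} := by
          ext x
          constructor
          · rintro ⟨m', hm', rfl⟩
            exact ⟨t n m', ⟨m', hm', rfl⟩, rfl⟩
          · rintro ⟨m, ⟨m', hm', rfl⟩, rfl⟩
            exact ⟨m', hm', rfl⟩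
        rw [h1]
        exact isClosed_arens_spine n _
      have hClsub : ∀ n, Cl n ⊆ {α} ∪ {x | ∃ nm ∈ S, x = q nm.1 nm.2} := by
        rintro n g' ⟨y, ⟨x, hx, rfl⟩, rfl⟩
        rcases hx with hx | ⟨m', hm', rfl⟩
        · rw [Set.mem_singleton_iff] at hx
          subst hx
          left
          show β n * ((β n)⁻¹ * α) ∈ {α}
          rw [Set.mem_singleton_iff]
          group
        · right
          exact ⟨(n, m'), hm', (hqassoc n m').symm ▸ rfl⟩
      have hαCl : ∀ n, α ∈ Cl n := by
        intro n
        refine ⟨e (bP n), ⟨bP n, Or.inl rfl, rfl⟩, ?_⟩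
        show β n * ((β n)⁻¹ * α) = α
        group
      set U := P ∩ ⋂ n ∈ Finset.range M, (Cl n)ᶜ with hU
      have hUnhds : U ∈ 𝓝 g := by
        refine Filter.inter_mem hP ?_
        refine (isOpen_biInter_finset fun n _ => (hClclosed n).isOpen_compl).mem_nhds ?_
        refine Set.mem_biInter fun n _ => ?_
        intro hmem
        exact hgT (hClsub n hmem)
      obtain ⟨x, ⟨hxP, hxI⟩, hxT⟩ := mem_closure_iff_nhds.1 hg U hUnhds
      have hxInot : ∀ n, n < M → x ∉ Cl n := by
        intro n hn hmem
        exact (Set.mem_iInter₂.1 hxI n (Finset.mem_range.2 hn)) hmem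
      rcases hxT with hx1 | ⟨nm, hnm, rfl⟩
      · rw [Set.mem_singleton_iff] at hx1
        subst hx1
        exact hxInot 0 (by omega) (hαCl 0)
      · by_cases hn : nm.1 < M
        · exact hxInot nm.1 hn ⟨e (pP nm.1 (t nm.1 nm.2)), ⟨pP nm.1 (t nm.1 nm.2),
            Or.inr ⟨nm.2, hnm, rfl⟩, rfl⟩, (hqassoc nm.1 nm.2).symm⟩
        · refine hPavoid nm.1 (by omega) _ hxP ?_
          rw [hgroup]
          exact hχmem N nm.1 nm.2 (by omega)
  -- K2 : spine-finite fan pieces are closed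
  have K2 : ∀ S : Set (ℕ × ℕ), (∀ n, {m | (n, m) ∈ S}.Finite) →
      IsClosed {x | ∃ nm ∈ S, x = q nm.1 nm.2} := by
    intro S hfin
    apply isClosed_of_closure_subset
    intro g hg
    by_contra hgT
    -- the sparse image set
    have hsparse : IsClosed (e '' {x | ∃ nm ∈ S, x = pP nm.1 (t nm.1 nm.2)}) := by
      apply he.isClosedMap
      have h1 : {x | ∃ nm ∈ S, x = pP nm.1 (t nm.1 nm.2)} =
          {x | ∃ nm ∈ {nm' : ℕ × ℕ | ∃ m', (nm'.1, m') ∈ S ∧ nm'.2 = t nm'.1 m'},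
            x = pP nm.1 nm.2} := by
        ext x
        constructor
        · rintro ⟨nm, hnm, rfl⟩
          exact ⟨(nm.1, t nm.1 nm.2), ⟨nm.2, hnm, rfl⟩, rfl⟩
        · rintro ⟨nm, ⟨m', hm', hm2⟩, rfl⟩
          exact ⟨(nm.1, m'), hm', by rw [hm2]⟩
      rw [h1]
      apply isClosed_arens_sparse
      intro n
      have h2 : {m | (n, m) ∈ {nm' : ℕ × ℕ | ∃ m', (nm'.1, m') ∈ S ∧ nm'.2 = t nm'.1 m'}} ⊆
          t n '' {m' | (n, m') ∈ S} := by
        rintro m ⟨m', hm', hmt⟩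
        exact ⟨m', hm', hmt.symm⟩
      exact Set.Finite.subset ((hfin n).image _) h2
    by_cases hall : ∀ N, g ∈ e '' FS N
    · -- g = α; the apex-avoidance argument
      have hgα : g = α := hFSinter g hall
      subst hgα
      have hαE' : α ∉ e '' {x | ∃ nm ∈ S, x = pP nm.1 (t nm.1 nm.2)} := by
        rintro ⟨x, hx, hxe⟩
        have hxa : x = aP := he.injective hxe
        subst hxa
        obtain ⟨nm, _, hcon⟩ := hx
        exact pP_ne_aP _ _ hcon.symm
      obtain ⟨P, hP, N', hPavoid⟩ := phi_trick α _ hsparse hαE'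
      set J := {x | ∃ nm ∈ S, nm.1 < N' ∧ x = q nm.1 nm.2} with hJ
      have hJfin : J.Finite := by
        have h1 : J ⊆ ⋃ n ∈ Finset.range N', (fun m => q n m) '' {m | (n, m) ∈ S} := by
          rintro x ⟨nm, hnm, hlt, rfl⟩
          exact Set.mem_biUnion (Finset.mem_range.2 hlt) ⟨nm.2, hnm, rfl⟩
        exact Set.Finite.subset
          ((Finset.range N').finite_toSet.biUnion fun n _ => (hfin n).image _) h1
      have hJc : IsClosed J := by
        rw [← Set.biUnion_of_singleton J]
        refine Set.Finite.isClosed_biUnion hJfin fun x hx => ?_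
        obtain ⟨nm, _, _, rfl⟩ := hx
        rw [hqassoc]
        exact closed_pt _ _
      have hαJ : α ∉ J := by
        rintro ⟨nm, _, _, hcon⟩
        exact hqne nm.1 nm.2 hcon.symm
      have hUnhds : P ∩ Jᶜ ∈ 𝓝 α := Filter.inter_mem hP (hJc.isOpen_compl.mem_nhds hαJ)
      obtain ⟨x, ⟨hxP, hxJ⟩, hxT⟩ := mem_closure_iff_nhds.1 hg _ hUnhds
      obtain ⟨nm, hnm, rfl⟩ := hxT
      by_cases hn : nm.1 < N'
      · exact hxJ ⟨nm, hnm, hn, rfl⟩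
      · refine hPavoid nm.1 (by omega) _ hxP ?_
        rw [hgroup]
        exact ⟨pP nm.1 (t nm.1 nm.2), ⟨nm, hnm, rfl⟩, rfl⟩
    · push_neg at hall
      obtain ⟨N, hN⟩ := hall
      obtain ⟨P, hP, N', hPavoid⟩ := phi_trick g _ (hFSclosed N) hN
      set M := max N N' + 1 with hM
      set J := {x | ∃ nm ∈ S, nm.1 < M ∧ x = q nm.1 nm.2} with hJ
      have hJfin : J.Finite := by
        have h1 : J ⊆ ⋃ n ∈ Finset.range M, (fun m => q n m) '' {m | (n, m) ∈ S} := by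
          rintro x ⟨nm, hnm, hlt, rfl⟩
          exact Set.mem_biUnion (Finset.mem_range.2 hlt) ⟨nm.2, hnm, rfl⟩
        exact Set.Finite.subset
          ((Finset.range M).finite_toSet.biUnion fun n _ => (hfin n).image _) h1
      have hJc : IsClosed J := by
        rw [← Set.biUnion_of_singleton J]
        refine Set.Finite.isClosed_biUnion hJfin fun x hx => ?_
        obtain ⟨nm, _, _, rfl⟩ := hx
        rw [hqassoc]
        exact closed_pt _ _
      have hgJ : g ∉ J := by
        rintro ⟨nm, hnm, _, hcon⟩
        exact hgT ⟨nm, hnm, hcon⟩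
      have hUnhds : P ∩ Jᶜ ∈ 𝓝 g := Filter.inter_mem hP (hJc.isOpen_compl.mem_nhds hgJ)
      obtain ⟨x, ⟨hxP, hxJ⟩, hxT⟩ := mem_closure_iff_nhds.1 hg _ hUnhds
      obtain ⟨nm, hnm, rfl⟩ := hxT
      by_cases hn : nm.1 < M
      · exact hxJ ⟨nm, hnm, hn, rfl⟩
      · refine hPavoid nm.1 (by omega) _ hxP ?_
        rw [hgroup]
        exact hχmem N nm.1 nm.2 (by omega)
  -- the closed map property and conclusion
  have hfin_of_closed : ∀ C : Set SeqFanSω, IsClosed C → fanApex ∉ C →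
      ∀ n, {m | fanP n m ∈ C}.Finite := by
    intro C hC hap n
    obtain ⟨M, hM⟩ := eventually_atTop.1 (isClosed_fan_iff.1 hC hap n)
    refine Set.Finite.subset (Set.finite_Iio M) fun m hm => ?_
    rw [Set.mem_Iio]
    by_contra h'
    exact hM m (by omega) hm
  have hFclosedmap : IsClosedMap F := by
    intro C hC
    by_cases hapex : fanApex ∈ C
    · have himg : F '' C =
          {α} ∪ {x | ∃ nm ∈ {nm : ℕ × ℕ | fanP nm.1 nm.2 ∈ C}, x = q nm.1 nm.2} := by
        ext g'
        constructor
        · rintro ⟨z, hz, rfl⟩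
          rcases fan_classify z with rfl | ⟨n, m, rfl⟩
          · exact Or.inl (by rw [hFapex]; rfl)
          · exact Or.inr ⟨(n, m), hz, hFp n m⟩
        · rintro (hg' | ⟨nm, hnm, rfl⟩)
          · rw [Set.mem_singleton_iff] at hg'
            exact ⟨fanApex, hapex, by rw [hFapex, hg']⟩
          · exact ⟨fanP nm.1 nm.2, hnm, hFp _ _⟩
      rw [himg]
      exact K1 _
    · have himg : F '' C =
          {x | ∃ nm ∈ {nm : ℕ × ℕ | fanP nm.1 nm.2 ∈ C}, x = q nm.1 nm.2} := by
        ext g'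
        constructor
        · rintro ⟨z, hz, rfl⟩
          rcases fan_classify z with rfl | ⟨n, m, rfl⟩
          · exact absurd hz hapex
          · exact ⟨(n, m), hz, hFp n m⟩
        · rintro ⟨nm, hnm, rfl⟩
          exact ⟨fanP nm.1 nm.2, hnm, hFp _ _⟩
      rw [himg]
      exact K2 _ (hfin_of_closed C hC hapex)
  exact ⟨F, Topology.IsClosedEmbedding.of_continuous_injective_isClosedMap hFcont hFinj
    hFclosedmap⟩

end Dir1

section Dir2

/-- spine-finite sets of non-apex points are closed in the fan -/
lemma isClosed_fan_sparse (S : Set (ℕ × ℕ)) (h : ∀ n, {m | (n, m) ∈ S}.Finite) :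
    IsClosed {x | ∃ nm ∈ S, x = fanP nm.1 nm.2} := by
  rw [isClosed_fan_iff]
  intro _ n
  have hfin : ((fun m => fanP n m) ⁻¹' {x | ∃ nm ∈ S, x = fanP nm.1 nm.2}).Finite := by
    refine Set.Finite.subset (h n) ?_
    intro m hm
    obtain ⟨nm, hnmS, hk⟩ := hm
    obtain ⟨h1, h2⟩ := fanP_inj hk
    simp only [Set.mem_setOf_eq]
    rw [h1, h2]
    exact hnmS
  filter_upwards [eventually_not_mem_of_finite hfin] with m hm
  exact hm

theorem fan_to_arens {G : Type*} [Group G] [TopologicalSpace G] [IsTopologicalGroup G]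
    (h : ∃ f : SeqFanSω → G, Topology.IsClosedEmbedding f) :
    ∃ e : ArensS2 → G, Topology.IsClosedEmbedding e := by
  classical
  obtain ⟨f, hf⟩ := h
  set α : G := f fanApex with hα
  set y : ℕ → ℕ → G := fun n u => f (fanP n u) with hy
  set B : ℕ → G := fun n => y 0 n with hB
  set v : ℕ → ℕ → G := fun n u => B n * α⁻¹ * y (n + 1) u with hv
  have hyinj : ∀ n, Function.Injective (y n) := by
    intro n u u' huu
    exact (fanP_inj (hf.injective huu)).2
  have hyne : ∀ n u, y n u ≠ α := by
    intro n u huu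
    exact fanP_ne_apex n u (hf.injective huu)
  have hvinj : ∀ n, Function.Injective (v n) := by
    intro n u u' huu
    exact hyinj _ (mul_left_cancel huu)
  have hylim : ∀ n, Filter.Tendsto (y n) atTop (𝓝 α) := fun n =>
    (hf.continuous.tendsto fanApex).comp (tendsto_fanP n)
  -- the avoidance set is spine-finite
  set A : Set G := {α} ∪ Set.range B with hA
  have hAfin : ∀ n, {u | v n u ∈ A}.Finite := by
    intro n
    have h1 : {u | v n u = α}.Finite :=
      Set.Subsingleton.finite fun u hu u' hu' => hvinj n (hu.trans hu'.symm)
    have h2 : {u | ∃ j, v n u = B j}.Finite := by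
      by_contra hinf
      replace hinf : {u | ∃ j, v n u = B j}.Infinite := hinf
      set W : Set ℕ := {u | ∃ j, v n u = B j} with hW
      set jmap : ℕ → ℕ := fun u => if hu : ∃ j, v n u = B j then hu.choose else 0 with hjmap
      have hjspec : ∀ u ∈ W, v n u = B (jmap u) := by
        intro u hu
        have hu' : ∃ j, v n u = B j := hu
        show v n u = B (if hu : ∃ j, v n u = B j then hu.choose else 0)
        rw [dif_pos hu']
        exact hu'.choose_spec
      have hjinjOn : Set.InjOn jmap W := by
        intro u hu u' hu' he
        apply hvinj n
        rw [hjspec u hu, hjspec u' hu', he]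
      have hyval : ∀ u ∈ W, y (n + 1) u = α * (B n)⁻¹ * B (jmap u) := by
        intro u hu
        rw [← hjspec u hu]
        show y (n + 1) u = α * (B n)⁻¹ * (B n * α⁻¹ * y (n + 1) u)
        group
      set c : G := α * (B n)⁻¹ * α with hc
      -- c lies in the closure of the y-image of every infinite subset of W
      have hclos : ∀ W' : Set ℕ, W' ⊆ W → W'.Infinite →
          c ∈ f '' ({x | ∃ u ∈ W', x = fanP (n + 1) u} ∪ {fanApex}) := by
        intro W' hW'sub hW'inf
        have hZclosed : IsClosed (f '' ({x | ∃ u ∈ W', x = fanP (n + 1) u} ∪ {fanApex})) :=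
          hf.isClosedMap _ (isClosed_fan_of_apex_mem (Or.inr rfl))
        rw [← hZclosed.closure_eq]
        rw [mem_closure_iff_nhds]
        intro T hT
        have hφ : Continuous (fun g : G => α * (B n)⁻¹ * g) :=
          continuous_const.mul continuous_id
        have hφc : (fun g : G => α * (B n)⁻¹ * g) ⁻¹' T ∈ 𝓝 α := by
          apply hφ.continuousAt.preimage_mem_nhds
          show T ∈ 𝓝 (α * (B n)⁻¹ * α)
          exact hc ▸ hT
        obtain ⟨N, hN⟩ := eventually_atTop.1 ((hylim 0).eventually_mem hφc)
        obtain ⟨jv, ⟨u, huW', rfl⟩, hjvgt⟩ := (hW'inf.image (hjinjOn.mono hW'sub)).exists_gt N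
        refine ⟨y (n + 1) u, ?_, ?_⟩
        · rw [hyval u (hW'sub huW')]
          exact hN (jmap u) (le_of_lt hjvgt)
        · exact ⟨fanP (n + 1) u, Or.inl ⟨u, huW', rfl⟩, rfl⟩
      obtain ⟨z, hz, hzc⟩ := hclos W (fun _ h => h) hinf
      rcases hz with ⟨u₀, hu₀, rfl⟩ | hz
      · -- c = y (n+1) u₀ ; use W \ {u₀}
        obtain ⟨z', hz', hzc'⟩ := hclos (W \ {u₀}) Set.diff_subset
          (hinf.diff (Set.finite_singleton u₀))
        have hzz : z' = fanP (n + 1) u₀ := hf.injective (by rw [hzc', hzc])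
        rcases hz' with ⟨u₁, hu₁, he1⟩ | hz'
        · rw [hzz] at he1
          have := (fanP_inj he1).2
          exact hu₁.2 (by rw [← this]; exact rfl)
        · rw [hzz] at hz'
          exact fanP_ne_apex _ _ hz'
      · -- c = α forces B n = α
        rw [Set.mem_singleton_iff] at hz
        rw [hz] at hzc
        have hBn : B n = α := by
          have h3 : α * (B n)⁻¹ * α = α := hzc.symm
          have h4 : α * (B n)⁻¹ * α = α * α⁻¹ * α := by
            rw [h3]; group
          have h5 : (B n)⁻¹ = α⁻¹ := mul_left_cancel (mul_right_cancel h4)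
          exact inv_injective h5
        exact hyne 0 n hBn
    have hsub : {u | v n u ∈ A} ⊆ {u | v n u = α} ∪ {u | ∃ j, v n u = B j} := by
      intro u hu
      rcases hu with hu | ⟨j, hj⟩
      · exact Or.inl hu
      · exact Or.inr ⟨j, hj.symm⟩
    exact Set.Finite.subset (h1.union h2) hsub
  obtain ⟨t, htmono, htinj, htavoid⟩ := exists_selection v hvinj A hAfin
  set Q : ℕ → ℕ → G := fun n m => v n (t n m) with hQ
  have hQne : ∀ n m, Q n m ≠ α := fun n m h => htavoid n m (Or.inl h)
  have hQneB : ∀ n m k, Q n m ≠ B k := fun n m k h => htavoid n m (Or.inr ⟨k, h.symm⟩)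
  have hBlim : Filter.Tendsto B atTop (𝓝 α) := hylim 0
  have hBinj : Function.Injective B := hyinj 0
  have hBne : ∀ k, B k ≠ α := hyne 0
  have hQlim : ∀ n, Filter.Tendsto (Q n) atTop (𝓝 (B n)) := by
    intro n
    have h1 : Filter.Tendsto (fun m => y (n + 1) (t n m)) atTop (𝓝 α) :=
      (hylim (n + 1)).comp (htmono n).tendsto_atTop
    have h2 := h1.const_mul (B n * α⁻¹)
    rw [show B n * α⁻¹ * α = B n by group] at h2
    exact h2
  have hQgroup : ∀ n m, α * (B n)⁻¹ * Q n m = y (n + 1) (t n m) := by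
    intro n m
    show α * (B n)⁻¹ * (B n * α⁻¹ * y (n + 1) (t n m)) = _
    group
  have hQrepr : ∀ n m, Q n m = (B n * α⁻¹) * f (fanP (n + 1) (t n m)) := fun n m => rfl
  -- the Arens map
  set f2 : ArensS2 → G := fun x =>
    if h : ∃ nm : ℕ × ℕ, x = pP nm.1 nm.2 then Q h.choose.1 h.choose.2
    else if h : ∃ k, x = bP k then B h.choose
    else α with hf2
  have hf2_pP : ∀ n m, f2 (pP n m) = Q n m := by
    intro n m
    have hex : ∃ nm : ℕ × ℕ, pP n m = pP nm.1 nm.2 := ⟨(n, m), rfl⟩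
    rw [hf2]
    simp only [dif_pos hex]
    have h1 := pP_fst_snd hex.choose_spec
    rw [← h1.1, ← h1.2]
  have hf2_bP : ∀ k, f2 (bP k) = B k := by
    intro k
    have hne : ¬ ∃ nm : ℕ × ℕ, bP k = pP nm.1 nm.2 := by
      rintro ⟨nm, hcon⟩
      exact pP_ne_bP nm.1 nm.2 k hcon.symm
    have hex : ∃ k', bP k = bP k' := ⟨k, rfl⟩
    rw [hf2]
    simp only [dif_neg hne, dif_pos hex]
    rw [← bP_injective hex.choose_spec]
  have hf2_aP : f2 aP = α := by
    have hne1 : ¬ ∃ nm : ℕ × ℕ, aP = pP nm.1 nm.2 := by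
      rintro ⟨nm, hcon⟩
      exact pP_ne_aP nm.1 nm.2 hcon.symm
    have hne2 : ¬ ∃ k, aP = bP k := by
      rintro ⟨k, hcon⟩
      exact bP_ne_aP k hcon.symm
    rw [hf2]
    simp only [dif_neg hne1, dif_neg hne2]
  have hf2cont : Continuous f2 := by
    refine continuous_arens_dom ?_ ?_
    · simp only [hf2_bP, hf2_aP]
      exact hBlim
    · intro n
      simp only [hf2_pP, hf2_bP]
      exact hQlim n
  have hf2inj : Function.Injective f2 := by
    intro x x' hxx
    rcases arens_classify x with rfl | ⟨k, rfl⟩ | ⟨n, m, rfl⟩ <;>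
      rcases arens_classify x' with rfl | ⟨k', rfl⟩ | ⟨n', m', rfl⟩
    · rfl
    · rw [hf2_aP, hf2_bP] at hxx
      exact absurd hxx.symm (hBne k')
    · rw [hf2_aP, hf2_pP] at hxx
      exact absurd hxx.symm (hQne n' m')
    · rw [hf2_bP, hf2_aP] at hxx
      exact absurd hxx (hBne k)
    · rw [hf2_bP, hf2_bP] at hxx
      rw [hBinj hxx]
    · rw [hf2_bP, hf2_pP] at hxx
      exact absurd hxx.symm (hQneB n' m' k)
    · rw [hf2_pP, hf2_aP] at hxx
      exact absurd hxx (hQne n m)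
    · rw [hf2_pP, hf2_bP] at hxx
      exact absurd hxx (hQneB n m k')
    · rw [hf2_pP, hf2_pP] at hxx
      have h1 := htinj _ _ _ _ hxx
      rw [show n = n' from congrArg Prod.fst h1, show m = m' from congrArg Prod.snd h1]
  -- helpers
  have closed_ptL : ∀ (z : SeqFanSω) (c : G), IsClosed {c * f z} := by
    intro z c
    have h1 : IsClosed (f '' {z}) := hf.isClosedMap _ isClosed_singleton
    rw [Set.image_singleton] at h1
    have h2 := (Homeomorph.mulLeft c).isClosedMap _ h1
    rwa [Set.image_singleton, Homeomorph.coe_mulLeft] at h2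
  have closed_translateL : ∀ (D : Set SeqFanSω) (c : G), IsClosed D →
      IsClosed ((fun g' => c * g') '' (f '' D)) := by
    intro D c hD
    have h2 := (Homeomorph.mulLeft c).isClosedMap _ (hf.isClosedMap _ hD)
    rwa [Homeomorph.coe_mulLeft] at h2
  have psi_trick : ∀ (g : G) (E : Set G), IsClosed E → g ∉ E →
      ∃ P, P ∈ 𝓝 g ∧ ∃ N' : ℕ, ∀ n, N' ≤ n → ∀ p, p ∈ P → α * (B n)⁻¹ * p ∉ E := by
    intro g E hE hgE
    have hΨ : Continuous (fun p : G × G => α * p.1⁻¹ * p.2) :=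
      (continuous_const.mul continuous_fst.inv).mul continuous_snd
    have h1 : Eᶜ ∈ 𝓝 ((fun p : G × G => α * p.1⁻¹ * p.2) (α, g)) := by
      have hval : (fun p : G × G => α * p.1⁻¹ * p.2) (α, g) = g := by
        show α * α⁻¹ * g = g
        group
      rw [hval]
      exact hE.isOpen_compl.mem_nhds hgE
    have h2 := hΨ.continuousAt.preimage_mem_nhds h1
    rw [mem_nhds_prod_iff] at h2
    obtain ⟨Bs, hBs, P, hP, hPB⟩ := h2
    obtain ⟨N', hN'⟩ := eventually_atTop.1 (hBlim.eventually_mem hBs)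
    refine ⟨P, hP, N', fun n hn p hp hmem => ?_⟩
    exact hPB (Set.mk_mem_prod (hN' n hn) hp) hmem
  -- the closed map property
  have hf2closedmap : IsClosedMap f2 := by
    intro C hC
    obtain ⟨hcl1, hcl2⟩ := isClosed_arens_iff.1 hC
    set NB : Set ℕ := {k | bP k ∈ C} with hNB
    set S : Set (ℕ × ℕ) := {nm | pP nm.1 nm.2 ∈ C} with hS
    have hSfin : ∀ n, n ∉ NB → {m | (n, m) ∈ S}.Finite := by
      intro n hn
      obtain ⟨M, hM⟩ := eventually_atTop.1 (hcl2 n hn)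
      refine Set.Finite.subset (Set.finite_Iio M) fun m hm => ?_
      rw [Set.mem_Iio]
      by_contra h'
      exact hM m (by omega) hm
    have hNBfin : aP ∉ C → NB.Finite := by
      intro haC
      obtain ⟨M, hM⟩ := eventually_atTop.1 (hcl1 haC)
      refine Set.Finite.subset (Set.finite_Iio M) fun k hk => ?_
      rw [Set.mem_Iio]
      by_contra h'
      exact hM k (by omega) hk
    have himg : f2 '' C = {x | aP ∈ C ∧ x = α} ∪ {x | ∃ k ∈ NB, x = B k} ∪
        {x | ∃ nm ∈ S, x = Q nm.1 nm.2} := by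
      ext g'
      constructor
      · rintro ⟨x, hx, rfl⟩
        rcases arens_classify x with rfl | ⟨k, rfl⟩ | ⟨n1, m1, rfl⟩
        · exact Or.inl (Or.inl ⟨hx, hf2_aP⟩)
        · exact Or.inl (Or.inr ⟨k, hx, hf2_bP k⟩)
        · exact Or.inr ⟨(n1, m1), hx, hf2_pP n1 m1⟩
      · rintro ((⟨hx, rfl⟩ | ⟨k, hk, rfl⟩) | ⟨nm, hnm, rfl⟩)
        · exact ⟨aP, hx, hf2_aP⟩
        · exact ⟨bP k, hk, hf2_bP k⟩
        · exact ⟨pP nm.1 nm.2, hnm, hf2_pP nm.1 nm.2⟩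
    rw [himg]
    apply isClosed_of_closure_subset
    intro g hg
    by_contra hgT
    -- tail sets in the fan
    set FT : ℕ → Set SeqFanSω := fun N => {fanApex} ∪
      {x | ∃ nm, nm ∈ S ∧ N ≤ nm.1 ∧ x = fanP (nm.1 + 1) (t nm.1 nm.2)} with hFT
    have hFTclosed : ∀ N, IsClosed (f '' FT N) :=
      fun N => hf.isClosedMap _ (isClosed_fan_of_apex_mem (Or.inl rfl))
    have hymem : ∀ N n m, N ≤ n → (n, m) ∈ S → y (n + 1) (t n m) ∈ f '' FT N :=
      fun N n m hn hnm => ⟨fanP (n + 1) (t n m), Or.inr ⟨(n, m), hnm, hn, rfl⟩, rfl⟩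
    have hFTinter : ∀ g', (∀ N, g' ∈ f '' FT N) → g' = α := by
      intro g' hg'
      obtain ⟨z0, hz0, hgz⟩ := hg' 0
      have hzall : ∀ N, z0 ∈ FT N := by
        intro N
        obtain ⟨z1, hz1, hgz1⟩ := hg' N
        rwa [hf.injective (hgz1.trans hgz.symm)] at hz1
      rcases fan_classify z0 with rfl | ⟨k, u, rfl⟩
      · rw [← hgz]
      · rcases hzall (k + 1) with hcon | ⟨nm, _, hge, hcon⟩
        · exact absurd hcon (fanP_ne_apex k u)
        · have h1 := (fanP_inj hcon).1
          omega
    -- the C0 part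
    set Z0 : Set SeqFanSω := {x | ∃ k ∈ NB, x = fanP 0 k} ∪
      {x | aP ∈ C ∧ x = fanApex} with hZ0
    have hZ0closed : IsClosed (f '' Z0) := by
      apply hf.isClosedMap
      by_cases haC : aP ∈ C
      · exact isClosed_fan_of_apex_mem (Or.inr ⟨haC, rfl⟩)
      · have hZeq : Z0 = (fun k => fanP 0 k) '' NB := by
          ext x
          constructor
          · rintro (⟨k, hk, rfl⟩ | ⟨hcon, _⟩)
            · exact ⟨k, hk, rfl⟩
            · exact absurd hcon haC
          · rintro ⟨k, hk, rfl⟩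
            exact Or.inl ⟨k, hk, rfl⟩
        rw [hZeq]
        exact Set.Finite.isClosed ((hNBfin haC).image _)
    have hZ0sub : f '' Z0 ⊆ {x | aP ∈ C ∧ x = α} ∪ {x | ∃ k ∈ NB, x = B k} ∪
        {x | ∃ nm ∈ S, x = Q nm.1 nm.2} := by
      rintro g' ⟨z, hz, rfl⟩
      rcases hz with ⟨k, hk, rfl⟩ | ⟨haC, rfl⟩
      · exact Or.inl (Or.inr ⟨k, hk, rfl⟩)
      · exact Or.inl (Or.inl ⟨haC, rfl⟩)
    -- spine translates
    set Cl2 : ℕ → Set G := fun n => (fun g' => (B n * α⁻¹) * g') '' (f ''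
      ({fanApex} ∪ {x | ∃ m', (n, m') ∈ S ∧ x = fanP (n + 1) (t n m')})) with hCl2
    have hCl2closed : ∀ n, IsClosed (Cl2 n) := fun n =>
      closed_translateL _ _ (isClosed_fan_of_apex_mem (Or.inl rfl))
    have hCl2sub : ∀ n, n ∈ NB → Cl2 n ⊆ {x | aP ∈ C ∧ x = α} ∪ {x | ∃ k ∈ NB, x = B k} ∪
        {x | ∃ nm ∈ S, x = Q nm.1 nm.2} := by
      rintro n hn g' ⟨w, ⟨z, hz, rfl⟩, rfl⟩
      rcases hz with hz | ⟨m', hm', rfl⟩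
      · rw [Set.mem_singleton_iff] at hz
        subst hz
        refine Or.inl (Or.inr ⟨n, hn, ?_⟩)
        show B n * α⁻¹ * f fanApex = B n
        rw [← hα, inv_mul_cancel_right]
      · exact Or.inr ⟨(n, m'), hm', rfl⟩
    have hQCl2 : ∀ n m, (n, m) ∈ S → Q n m ∈ Cl2 n := by
      intro n m hnm
      exact ⟨f (fanP (n + 1) (t n m)), ⟨fanP (n + 1) (t n m), Or.inr ⟨m, hnm, rfl⟩, rfl⟩, rfl⟩
    have hαCl2 : ∀ n, α ∉ Cl2 n := by
      rintro n ⟨w, ⟨z, hz, rfl⟩, hcon⟩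
      rcases hz with hz | ⟨m', _, rfl⟩
      · rw [Set.mem_singleton_iff] at hz
        subst hz
        have h5 : B n * α⁻¹ * f fanApex = α := hcon
        rw [← hα, inv_mul_cancel_right] at h5
        exact hBne n h5
      · exact hQne n m' hcon
    -- finite junk
    set Junk : ℕ → Set G := fun M =>
      {x | ∃ nm ∈ S, nm.1 < M ∧ nm.1 ∉ NB ∧ x = Q nm.1 nm.2} with hJunk
    have hJunkfin : ∀ M, (Junk M).Finite := by
      intro M
      have h1 : Junk M ⊆ ⋃ n ∈ Finset.range M,
          (fun m => Q n m) '' {m | (n, m) ∈ S ∧ n ∉ NB} := by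
        rintro x ⟨nm, hnm, hlt, hnb, rfl⟩
        exact Set.mem_biUnion (Finset.mem_range.2 hlt) ⟨nm.2, ⟨hnm, hnb⟩, rfl⟩
      refine Set.Finite.subset ((Finset.range M).finite_toSet.biUnion fun n _ => ?_) h1
      by_cases hn : n ∈ NB
      · refine Set.Finite.image _ (Set.Finite.subset (Set.finite_empty) ?_)
        rintro m ⟨_, hm2⟩
        exact hm2 hn
      · exact Set.Finite.image _ (Set.Finite.subset (hSfin n hn) fun m hm => hm.1)
    have hJunkclosed : ∀ M, IsClosed (Junk M) := by
      intro M
      rw [← Set.biUnion_of_singleton (Junk M)]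
      refine Set.Finite.isClosed_biUnion (hJunkfin M) fun x hx => ?_
      obtain ⟨nm, _, _, _, rfl⟩ := hx
      rw [hQrepr]
      exact closed_ptL _ _
    have hJunksub : ∀ M, Junk M ⊆ {x | aP ∈ C ∧ x = α} ∪ {x | ∃ k ∈ NB, x = B k} ∪
        {x | ∃ nm ∈ S, x = Q nm.1 nm.2} := by
      rintro M x ⟨nm, hnm, _, _, rfl⟩
      exact Or.inr ⟨nm, hnm, rfl⟩
    by_cases hall : ∀ N, g ∈ f '' FT N
    · -- g = α and the apex is not in the image
      have hgα : g = α := hFTinter g hall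
      subst hgα
      have haC : aP ∉ C := fun haC => hgT (Or.inl (Or.inl ⟨haC, rfl⟩))
      -- the sparse avoided set
      have hE'closed : IsClosed (f ''
          {x | ∃ nm ∈ S, nm.1 ∉ NB ∧ x = fanP (nm.1 + 1) (t nm.1 nm.2)}) := by
        apply hf.isClosedMap
        have hrw : {x | ∃ nm ∈ S, nm.1 ∉ NB ∧ x = fanP (nm.1 + 1) (t nm.1 nm.2)} =
            {x | ∃ km ∈ {km : ℕ × ℕ |
              ∃ nm, nm ∈ S ∧ nm.1 ∉ NB ∧ km = (nm.1 + 1, t nm.1 nm.2)},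
              x = fanP km.1 km.2} := by
          ext x
          constructor
          · rintro ⟨nm, h1, h2, rfl⟩
            exact ⟨(nm.1 + 1, t nm.1 nm.2), ⟨nm, h1, h2, rfl⟩, rfl⟩
          · rintro ⟨km, ⟨nm, h1, h2, rfl⟩, rfl⟩
            exact ⟨nm, h1, h2, rfl⟩
        rw [hrw]
        apply isClosed_fan_sparse
        intro k
        by_cases hk : ∃ n, k = n + 1 ∧ n ∉ NB
        · obtain ⟨n, rfl, hnNB⟩ := hk
          refine Set.Finite.subset ((hSfin n hnNB).image (t n)) ?_
          rintro u ⟨nm, h1, h2, h3⟩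
          have he1 : nm.1 = n := by
            have := congrArg Prod.fst h3
            simp only at this
            omega
          have he2 : u = t nm.1 nm.2 := congrArg Prod.snd h3
          refine ⟨nm.2, ?_, ?_⟩
          · show (n, nm.2) ∈ S
            rw [← he1]
            exact h1
          · rw [he2, he1]
        · refine Set.Finite.subset Set.finite_empty ?_
          rintro u ⟨nm, h1, h2, h3⟩
          exact absurd ⟨nm.1, congrArg Prod.fst h3, h2⟩ hk
      have hαE' : α ∉ f '' {x | ∃ nm ∈ S, nm.1 ∉ NB ∧ x = fanP (nm.1 + 1) (t nm.1 nm.2)} := by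
        rintro ⟨z, hz, hze⟩
        have hza : z = fanApex := hf.injective hze
        subst hza
        obtain ⟨nm, _, _, hcon⟩ := hz
        exact fanP_ne_apex _ _ hcon.symm
      obtain ⟨P, hP, N', hPavoid⟩ := psi_trick α _ hE'closed hαE'
      set R : Set G := f '' Z0 ∪ (⋃ n ∈ NB, Cl2 n) ∪ Junk N' with hR
      have hRclosed : IsClosed R :=
        ((hZ0closed.union (Set.Finite.isClosed_biUnion (hNBfin haC)
          fun n _ => hCl2closed n))).union (hJunkclosed N')
      have hαR : α ∉ R := by
        rintro ((⟨z, hz, hze⟩ | hα2) | hα3)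
        · have hza : z = fanApex := hf.injective hze
          subst hza
          rcases hz with ⟨k, _, hcon⟩ | ⟨hcon, _⟩
          · exact fanP_ne_apex 0 k hcon.symm
          · exact haC hcon
        · obtain ⟨n, _, hmem⟩ := Set.mem_iUnion₂.1 hα2
          exact hαCl2 n hmem
        · obtain ⟨nm, _, _, _, hcon⟩ := hα3
          exact hQne nm.1 nm.2 hcon.symm
      have hUnhds : P ∩ Rᶜ ∈ 𝓝 α := Filter.inter_mem hP (hRclosed.isOpen_compl.mem_nhds hαR)
      obtain ⟨x, ⟨hxP, hxR⟩, hxT⟩ := mem_closure_iff_nhds.1 hg _ hUnhds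
      rcases hxT with (⟨hcon, rfl⟩ | ⟨k, hk, rfl⟩) | ⟨nm, hnm, rfl⟩
      · exact haC hcon
      · exact hxR (Or.inl (Or.inl ⟨fanP 0 k, Or.inl ⟨k, hk, rfl⟩, rfl⟩))
      · by_cases hnNB : nm.1 ∈ NB
        · exact hxR (Or.inl (Or.inr (Set.mem_biUnion hnNB (hQCl2 nm.1 nm.2 hnm))))
        · by_cases hlt : nm.1 < N'
          · exact hxR (Or.inr ⟨nm, hnm, hlt, hnNB, rfl⟩)
          · refine hPavoid nm.1 (by omega) _ hxP ?_
            rw [hQgroup]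
            exact ⟨fanP (nm.1 + 1) (t nm.1 nm.2), ⟨nm, hnm, hnNB, rfl⟩, rfl⟩
    · push_neg at hall
      obtain ⟨N, hN⟩ := hall
      obtain ⟨P, hP, N', hPavoid⟩ := psi_trick g _ (hFTclosed N) hN
      set M := max N N' with hM
      set R : Set G := f '' Z0 ∪ (⋃ n ∈ {n' | n' ∈ NB ∧ n' < M}, Cl2 n) ∪ Junk M with hR
      have hRclosed : IsClosed R := by
        refine (hZ0closed.union (Set.Finite.isClosed_biUnion ?_ fun n _ => hCl2closed n)).union
          (hJunkclosed M)
        exact Set.Finite.subset (Set.finite_Iio M) fun k hk => hk.2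
      have hgR : g ∉ R := by
        rintro ((hg1 | hg2) | hg3)
        · exact hgT (hZ0sub hg1)
        · obtain ⟨n, hn, hmem⟩ := Set.mem_iUnion₂.1 hg2
          exact hgT (hCl2sub n hn.1 hmem)
        · exact hgT (hJunksub M hg3)
      have hUnhds : P ∩ Rᶜ ∈ 𝓝 g := Filter.inter_mem hP (hRclosed.isOpen_compl.mem_nhds hgR)
      obtain ⟨x, ⟨hxP, hxR⟩, hxT⟩ := mem_closure_iff_nhds.1 hg _ hUnhds
      rcases hxT with (⟨hcon, rfl⟩ | ⟨k, hk, rfl⟩) | ⟨nm, hnm, rfl⟩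
      · exact hxR (Or.inl (Or.inl ⟨fanApex, Or.inr ⟨hcon, rfl⟩, rfl⟩))
      · exact hxR (Or.inl (Or.inl ⟨fanP 0 k, Or.inl ⟨k, hk, rfl⟩, rfl⟩))
      · by_cases hge : M ≤ nm.1
        · refine hPavoid nm.1 (by omega) _ hxP ?_
          rw [hQgroup]
          exact hymem N nm.1 nm.2 (by omega) hnm
        · by_cases hnNB : nm.1 ∈ NB
          · exact hxR (Or.inl (Or.inr (Set.mem_biUnion ⟨hnNB, by omega⟩
              (hQCl2 nm.1 nm.2 hnm))))
          · exact hxR (Or.inr ⟨nm, hnm, by omega, hnNB, rfl⟩)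
  exact ⟨f2, Topology.IsClosedEmbedding.of_continuous_injective_isClosedMap hf2cont hf2inj
    hf2closedmap⟩

end Dir2

theorem stmt8 {G : Type*} [Group G] [TopologicalSpace G] [IsTopologicalGroup G] :
    (∃ e : ArensS2 → G, Topology.IsClosedEmbedding e) ↔
    (∃ e : SeqFanSω → G, Topology.IsClosedEmbedding e) := by
  exact ⟨fun h => arens_to_fan h, fun h => fan_to_arens h⟩
end

section
/- The space C_k(M,2) of continuous {0,1}-valued functions on the countable metric fan M with the compact-open topology is sequential: every sequentially closed subset of C_k(M,2) is closed. -/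
open Filter Topology Set

/-- The countable metric fan `M = (ω × ω) ∪ {∞}`; `none` plays the role of `∞`. -/
def Fan : Type := Option (ℕ × ℕ)

/-- The basic neighborhood `U(n) = {∞} ∪ ((ω \ n) × ω)` of `∞`. -/
def fanU (n : ℕ) : Set Fan := {x | x = none ∨ ∃ p : ℕ × ℕ, x = some p ∧ n ≤ p.1}

/-- The fan topology: points of `ω × ω` are isolated and the sets `U(n)` are
basic neighborhoods of `∞`. -/
instance : TopologicalSpace Fan :=
  TopologicalSpace.generateFrom
    ({V | ∃ p : ℕ × ℕ, V = {some p}} ∪ {V | ∃ n : ℕ, V = fanU n})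

namespace FanProof

lemma fan_cases (x : Fan) : x = none ∨ ∃ p : ℕ × ℕ, x = some p :=
  Option.casesOn x (Or.inl rfl) fun p => Or.inr ⟨p, rfl⟩

lemma none_mem_fanU (n : ℕ) : (none : Fan) ∈ fanU n := Or.inl rfl

lemma some_mem_fanU {n : ℕ} {p : ℕ × ℕ} (h : n ≤ p.1) : (some p : Fan) ∈ fanU n :=
  Or.inr ⟨p, rfl, h⟩

lemma fanU_mono {m n : ℕ} (h : m ≤ n) : fanU n ⊆ fanU m := by
  rintro x (rfl | ⟨p, rfl, hp⟩)
  · exact Or.inl rfl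
  · exact Or.inr ⟨p, rfl, h.trans hp⟩

lemma isOpen_iff_gen {S : Set Fan} :
    IsOpen S ↔ TopologicalSpace.GenerateOpen
      ({V | ∃ p : ℕ × ℕ, V = {some p}} ∪ {V | ∃ n : ℕ, V = fanU n}) S := Iff.rfl

lemma isOpen_fan_singleton (p : ℕ × ℕ) : IsOpen ({some p} : Set Fan) :=
  TopologicalSpace.isOpen_generateFrom_of_mem (Or.inl ⟨p, rfl⟩)

lemma isOpen_fanU (n : ℕ) : IsOpen (fanU n) :=
  TopologicalSpace.isOpen_generateFrom_of_mem (Or.inr ⟨n, rfl⟩)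

lemma exists_fanU_subset {S : Set Fan} (hS : IsOpen S) :
    (none : Fan) ∈ S → ∃ n, fanU n ⊆ S := by
  rw [isOpen_iff_gen] at hS
  induction hS with
  | basic V hV =>
    intro h0
    rcases hV with ⟨p, rfl⟩ | ⟨n, rfl⟩
    · exact absurd h0 (fun h => Option.some_ne_none p (Set.mem_singleton_iff.1 h).symm)
    · exact ⟨n, subset_rfl⟩
  | univ => exact fun _ => ⟨0, fun x _ => trivial⟩
  | inter U V hU hV ihU ihV =>
    intro h0
    obtain ⟨n, hn⟩ := ihU h0.1
    obtain ⟨m, hm⟩ := ihV h0.2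
    exact ⟨max n m, fun x hx =>
      ⟨hn (fanU_mono (le_max_left _ _) hx), hm (fanU_mono (le_max_right _ _) hx)⟩⟩
  | sUnion 𝒮 h ih =>
    intro h0
    obtain ⟨t, ht, h0t⟩ := h0
    obtain ⟨n, hn⟩ := ih t ht h0t
    exact ⟨n, fun x hx => ⟨t, ht, hn hx⟩⟩

lemma isOpen_fan {S : Set Fan} (h : (none : Fan) ∈ S → ∃ n, fanU n ⊆ S) : IsOpen S := by
  by_cases h0 : (none : Fan) ∈ S
  · obtain ⟨n, hn⟩ := h h0
    have hEq : S = fanU n ∪ ⋃ p ∈ {p : ℕ × ℕ | (some p : Fan) ∈ S}, ({some p} : Set Fan) := by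
      ext x
      constructor
      · intro hx
        rcases fan_cases x with rfl | ⟨p, rfl⟩
        · exact Or.inl (none_mem_fanU n)
        · exact Or.inr (Set.mem_biUnion hx rfl)
      · rintro (hx | hx)
        · exact hn hx
        · simp only [Set.mem_iUnion, Set.mem_singleton_iff] at hx
          obtain ⟨p, hp, rfl⟩ := hx
          exact hp
    rw [hEq]
    exact (isOpen_fanU n).union (isOpen_biUnion fun p _ => isOpen_fan_singleton p)
  · have hEq : S = ⋃ p ∈ {p : ℕ × ℕ | (some p : Fan) ∈ S}, ({some p} : Set Fan) := by
      ext x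
      constructor
      · intro hx
        rcases fan_cases x with rfl | ⟨p, rfl⟩
        · exact absurd hx h0
        · exact Set.mem_biUnion hx rfl
      · intro hx
        simp only [Set.mem_iUnion, Set.mem_singleton_iff] at hx
        obtain ⟨p, hp, rfl⟩ := hx
        exact hp
    rw [hEq]
    exact isOpen_biUnion fun p _ => isOpen_fan_singleton p

/-- The compact set `K_φ = {∞} ∪ {(m,j) | j ≤ φ m}`. -/
def Kset (φ : ℕ → ℕ) : Set Fan :=
  {x | x = none ∨ ∃ p : ℕ × ℕ, x = some p ∧ p.2 ≤ φ p.1}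

lemma isCompact_Kset (φ : ℕ → ℕ) : IsCompact (Kset φ) := by
  apply isCompact_of_finite_subcover
  intro ι U hU hcov
  obtain ⟨i₀, hi₀⟩ := Set.mem_iUnion.1 (hcov (Or.inl rfl))
  obtain ⟨n, hn⟩ := exists_fanU_subset (hU i₀) hi₀
  have hchoice : ∀ p : ℕ × ℕ, p.2 ≤ φ p.1 → ∃ i, (some p : Fan) ∈ U i := fun p hp =>
    Set.mem_iUnion.1 (hcov (Or.inr ⟨p, rfl, hp⟩))
  have : Nonempty ι := ⟨i₀⟩
  choose! idx hidx using hchoice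
  classical
  refine ⟨insert i₀ ((Finset.range n ×ˢ
    Finset.range ((Finset.range n).sup φ + 1)).image idx), ?_⟩
  rintro x (rfl | ⟨p, rfl, hp⟩)
  · exact Set.mem_biUnion (Finset.mem_insert_self _ _) hi₀
  · by_cases hcase : n ≤ p.1
    · exact Set.mem_biUnion (Finset.mem_insert_self _ _) (hn (some_mem_fanU hcase))
    · push_neg at hcase
      have hpF : p ∈ Finset.range n ×ˢ Finset.range ((Finset.range n).sup φ + 1) := by
        refine Finset.mem_product.2 ⟨Finset.mem_range.2 hcase, Finset.mem_range.2 ?_⟩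
        exact lt_of_le_of_lt (hp.trans (Finset.le_sup (Finset.mem_range.2 hcase)))
          (Nat.lt_succ_self _)
      exact Set.mem_biUnion (Finset.mem_insert_of_mem (Finset.mem_image_of_mem idx hpF))
        (hidx p hp)

lemma compact_subset_Kset {K : Set Fan} (hK : IsCompact K) : ∃ ψ : ℕ → ℕ, K ⊆ Kset ψ := by
  have hfin : ∀ n : ℕ, (K \ fanU n).Finite := by
    intro n
    have hcpt : IsCompact (K \ fanU n) := hK.diff (isOpen_fanU n)
    have hcov : K \ fanU n ⊆ ⋃ p : ℕ × ℕ, ({some p} : Set Fan) := by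
      rintro x ⟨hxK, hxU⟩
      rcases fan_cases x with rfl | ⟨p, rfl⟩
      · exact absurd (none_mem_fanU n) hxU
      · exact Set.mem_iUnion.2 ⟨p, rfl⟩
    obtain ⟨t, ht⟩ := hcpt.elim_finite_subcover _ (fun p => isOpen_fan_singleton p) hcov
    refine Set.Finite.subset ((t.finite_toSet).image fun p => (some p : Fan)) ?_
    intro x hx
    have := ht hx
    replace this : ∃ p ∈ t, x = some p := by
      obtain ⟨p, hp, hpx⟩ := Set.mem_iUnion₂.1 this; exact ⟨p, hp, hpx⟩
    obtain ⟨p, hp, rfl⟩ := this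
    exact ⟨p, hp, rfl⟩
  have hcol : ∀ m : ℕ, {j : ℕ | (some (m, j) : Fan) ∈ K}.Finite := by
    intro m
    have hsub : {j : ℕ | (some (m, j) : Fan) ∈ K} ⊆
        (fun j => (some (m, j) : Fan)) ⁻¹' (K \ fanU (m + 1)) := by
      intro j hj
      refine ⟨hj, ?_⟩
      rintro (h | ⟨p, hp, hle⟩)
      · exact Option.some_ne_none _ h
      · have : p = (m, j) := Option.some.inj hp.symm
        subst this
        exact absurd hle (by omega)
    exact Set.Finite.subset ((hfin (m + 1)).preimage
      (Set.injOn_of_injective (fun a b hab => by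
        simpa using (Option.some.inj hab)))) hsub
  choose ψ hψ using fun m => (hcol m).bddAbove
  refine ⟨ψ, fun x hx => ?_⟩
  rcases fan_cases x with rfl | ⟨p, rfl⟩
  · exact Or.inl rfl
  · exact Or.inr ⟨p, rfl, hψ p.1 (show p.2 ∈ {j | (some (p.1, j) : Fan) ∈ K} by
      exact hx)⟩

/-- Every continuous function is eventually (in columns) equal to its value at `∞`. -/
lemma exists_tail (h : C(Fan, Bool)) :
    ∃ n : ℕ, ∀ p : ℕ × ℕ, n ≤ p.1 → h (some p) = h none := by
  have hopen : IsOpen (h ⁻¹' {h (none : Fan)}) :=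
    h.continuous.isOpen_preimage _ (isOpen_discrete _)
  obtain ⟨n, hn⟩ := exists_fanU_subset hopen (by exact rfl)
  exact ⟨n, fun p hp => hn (some_mem_fanU hp)⟩

lemma continuous_of_tail (g : Fan → Bool) (n : ℕ)
    (hg : ∀ p : ℕ × ℕ, n ≤ p.1 → g (some p) = g none) : Continuous g := by
  rw [continuous_def]
  intro U _
  apply isOpen_fan
  intro h0
  refine ⟨n, ?_⟩
  rintro x (rfl | ⟨p, rfl, hp⟩)
  · exact h0
  · show g (some p) ∈ U
    rw [hg p hp]
    exact h0

lemma eq_of_eventually {α : Type*} {u : ℕ → α} {a b : α}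
    (ha : ∀ᶠ s in atTop, u s = a) (hb : ∀ᶠ s in atTop, u s = b) : a = b := by
  obtain ⟨s, h1, h2⟩ := (ha.and hb).exists
  rw [← h1, h2]

/-- Convergence criterion in the compact-open topology. -/
lemma tendsto_of_eventually_agree {g : C(Fan, Bool)} {h : ℕ → C(Fan, Bool)} {n : ℕ}
    (H0 : ∀ s, (h s) none = g none)
    (Htail : ∀ s, ∀ p : ℕ × ℕ, n ≤ p.1 → h s (some p) = g (some p))
    (Hpt : ∀ p : ℕ × ℕ, ∀ᶠ s in atTop, h s (some p) = g (some p)) :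
    Tendsto h atTop (𝓝 g) := by
  rw [ContinuousMap.tendsto_nhds_compactOpen]
  intro K hK U hU hmap
  obtain ⟨ψ, hψ⟩ := compact_subset_Kset hK
  have key : ∀ᶠ s in atTop, ∀ p ∈ (Finset.range n ×ˢ
      Finset.range ((Finset.range n).sup ψ + 1) : Finset (ℕ × ℕ)),
      h s (some p) = g (some p) := by
    rw [Filter.eventually_all_finset]
    exact fun p _ => Hpt p
  filter_upwards [key] with s hs
  intro x hx
  have hxg : h s x = g x := by
    rcases fan_cases x with rfl | ⟨p, rfl⟩
    · exact H0 s
    · by_cases hc : n ≤ p.1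
      · exact Htail s p hc
      · push_neg at hc
        have hp2 : p.2 ≤ ψ p.1 := by
          rcases hψ hx with h' | ⟨q, hq, hle⟩
          · exact absurd h' (Option.some_ne_none _)
          · obtain rfl := Option.some.inj hq
            exact hle
        refine hs p (Finset.mem_product.2 ⟨Finset.mem_range.2 hc, Finset.mem_range.2 ?_⟩)
        exact lt_of_le_of_lt (hp2.trans (Finset.le_sup (Finset.mem_range.2 hc)))
          (Nat.lt_succ_self _)
  rw [hxg]
  exact hmap hx

/-- The "forbidden" sets in the recursion: functions agreeing with `f` at `∞`,
on all columns `≥ n`, and below height `k m` on columns `m < n`. -/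
def Wset (f : C(Fan, Bool)) (k : ℕ → ℕ) (n : ℕ) : Set C(Fan, Bool) :=
  {h | h none = f none ∧ (∀ p : ℕ × ℕ, n ≤ p.1 → h (some p) = f (some p)) ∧
    (∀ p : ℕ × ℕ, p.1 < n → p.2 ≤ k p.1 → h (some p) = f (some p))}

lemma wset_congr {f : C(Fan, Bool)} {k k' : ℕ → ℕ} {n : ℕ}
    (hkk : ∀ m, m < n → k m = k' m) : Wset f k n = Wset f k' n := by
  unfold Wset
  ext h
  constructor
  · rintro ⟨h1, h2, h3⟩
    exact ⟨h1, h2, fun p hp hle => h3 p hp (by rw [hkk p.1 hp]; exact hle)⟩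
  · rintro ⟨h1, h2, h3⟩
    exact ⟨h1, h2, fun p hp hle => h3 p hp (by rw [← hkk p.1 hp]; exact hle)⟩

open Classical in
lemma step {A : Set C(Fan, Bool)} (hA : IsSeqClosed A) (f : C(Fan, Bool))
    (k : ℕ → ℕ) (n : ℕ) (hW : ∀ h ∈ A, h ∉ Wset f k n) :
    ∃ t : ℕ, ∀ h ∈ A, h ∉ Wset f (Function.update k n t) (n + 1) := by
  by_contra hcon
  push_neg at hcon
  have hex : ∀ t : ℕ, ∃ h : C(Fan, Bool),
      h ∈ A ∧ h ∈ Wset f (Function.update k n t) (n + 1) := by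
    intro t
    obtain ⟨h, h1, h2⟩ := hcon t
    exact ⟨h, h1, h2⟩
  choose h hhA hhW using hex
  obtain ⟨g', -, ξ, hmono, hconv⟩ :=
    (isCompact_univ : IsCompact (Set.univ : Set (ℕ × ℕ → Bool))).isSeqCompact
      (x := fun t => fun p : ℕ × ℕ => h t (some p)) (fun _ => Set.mem_univ _)
  have hpt : ∀ p : ℕ × ℕ, ∀ᶠ s in atTop, h (ξ s) (some p) = g' p := by
    intro p
    have := (tendsto_pi_nhds.1 hconv) p
    rw [nhds_discrete, tendsto_pure] at this
    exact this
  -- facts about g'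
  have hg'_hi : ∀ p : ℕ × ℕ, n ≤ p.1 → g' p = f (some p) := by
    intro p hp
    rcases eq_or_lt_of_le hp with heq | hlt
    · -- p.1 = n : use the third component for large s
      have hev : ∀ᶠ s in atTop, h (ξ s) (some p) = f (some p) := by
        filter_upwards [eventually_ge_atTop p.2] with s hs
        refine (hhW (ξ s)).2.2 p (by omega) ?_
        rw [← heq, Function.update_self]
        exact hs.trans hmono.le_apply
      exact eq_of_eventually (hpt p) hev
    · exact eq_of_eventually (hpt p)
        (Eventually.of_forall fun s => (hhW (ξ s)).2.1 p hlt)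
  have hg'_low : ∀ p : ℕ × ℕ, p.1 < n → p.2 ≤ k p.1 → g' p = f (some p) := by
    intro p hp hle
    refine eq_of_eventually (hpt p) (Eventually.of_forall fun s => ?_)
    refine (hhW (ξ s)).2.2 p (by omega) ?_
    rwa [Function.update_of_ne (by omega)]
  -- the limit function
  obtain ⟨nf, hnf⟩ := exists_tail f
  have hGcont : Continuous (fun x : Fan => Option.elim x (f none) g') := by
    refine continuous_of_tail _ (max n nf) ?_
    intro p hp
    show g' p = f none
    rw [hg'_hi p (le_trans (le_max_left _ _) hp)]
    exact hnf p (le_trans (le_max_right _ _) hp)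
  set g : C(Fan, Bool) := ⟨fun x => Option.elim x (f none) g', hGcont⟩ with hgdef
  have hg_some : ∀ p : ℕ × ℕ, g (some p) = g' p := fun p => rfl
  have hg_none : g none = f none := rfl
  have htendsto : Tendsto (fun s => h (ξ s)) atTop (𝓝 g) := by
    refine tendsto_of_eventually_agree (n := n + 1) ?_ ?_ ?_
    · intro s
      rw [hg_none]
      exact (hhW (ξ s)).1
    · intro s p hp
      rw [hg_some, hg'_hi p (by omega)]
      exact (hhW (ξ s)).2.1 p hp
    · intro p
      filter_upwards [hpt p] with s hs
      rw [hg_some]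
      exact hs
  have hgA : g ∈ A := hA (fun s => hhA (ξ s)) htendsto
  refine hW g hgA ⟨hg_none, ?_, ?_⟩
  · intro p hp
    rw [hg_some]
    exact hg'_hi p hp
  · intro p hp hle
    rw [hg_some]
    exact hg'_low p hp hle

/-- The recursive construction of the heights. -/
noncomputable def chain {A : Set C(Fan, Bool)} (hA : IsSeqClosed A) (f : C(Fan, Bool))
    (hbase : ∀ h ∈ A, h ∉ Wset f (fun _ => 0) 0) :
    (n : ℕ) → {k : ℕ → ℕ // ∀ h ∈ A, h ∉ Wset f k n}
  | 0 => ⟨fun _ => 0, hbase⟩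
  | n + 1 =>
    let prev := chain hA f hbase n
    ⟨Function.update prev.1 n (Classical.choose (step hA f prev.1 n prev.2)),
      Classical.choose_spec (step hA f prev.1 n prev.2)⟩

lemma chain_coherent {A : Set C(Fan, Bool)} (hA : IsSeqClosed A) (f : C(Fan, Bool))
    (hbase : ∀ h ∈ A, h ∉ Wset f (fun _ => 0) 0) :
    ∀ n m : ℕ, m < n → (chain hA f hbase n).1 m = (chain hA f hbase (m + 1)).1 m := by
  intro n
  induction n with
  | zero => omega
  | succ n ih =>
    intro m hm
    rcases eq_or_lt_of_le (Nat.lt_succ_iff.1 hm) with heq | hlt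
    · subst heq; rfl
    · show (chain hA f hbase (n + 1)).1 m = _
      rw [show (chain hA f hbase (n + 1)).1 = Function.update (chain hA f hbase n).1 n
        (Classical.choose (step hA f (chain hA f hbase n).1 n (chain hA f hbase n).2))
        from rfl]
      rw [Function.update_of_ne (by omega)]
      exact ih m hlt

theorem main : SequentialSpace C(Fan, Bool) := by
  constructor
  intro A hA
  rw [← isOpen_compl_iff, isOpen_iff_mem_nhds]
  intro f hf
  have hbase : ∀ h ∈ A, h ∉ Wset f (fun _ => 0) 0 := by
    intro h hhA hhW
    have hEq : h = f := by
      ext x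
      rcases fan_cases x with rfl | ⟨p, rfl⟩
      · exact hhW.1
      · exact hhW.2.1 p (Nat.zero_le _)
    rw [hEq] at hhA
    exact hf hhA
  set φ : ℕ → ℕ := fun m => (chain hA f hbase (m + 1)).1 m with hφdef
  have hgood : ∀ n, ∀ h ∈ A, h ∉ Wset f φ n := by
    intro n
    have hEq : Wset f φ n = Wset f (chain hA f hbase n).1 n :=
      wset_congr fun m hm => (chain_coherent hA f hbase n m hm).symm
    rw [hEq]
    exact (chain hA f hbase n).2
  -- the open neighborhood of f
  set N : Set C(Fan, Bool) := {h | ∀ x ∈ Kset φ, h x = f x} with hNdef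
  have hNopen : IsOpen N := by
    have hEq : N = {h : C(Fan, Bool) | Set.MapsTo h (Kset φ ∩ f ⁻¹' {true}) {true}} ∩
        {h : C(Fan, Bool) | Set.MapsTo h (Kset φ ∩ f ⁻¹' {false}) {false}} := by
      ext h
      constructor
      · intro hh
        constructor
        · intro x hx
          have := hh x hx.1
          have hfx : f x = true := hx.2
          rw [Set.mem_singleton_iff, this, hfx]
        · intro x hx
          have := hh x hx.1
          have hfx : f x = false := hx.2
          rw [Set.mem_singleton_iff, this, hfx]
      · rintro ⟨h1, h2⟩ x hx
        cases hb : f x with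
        | false =>
          have := h2 ⟨hx, by simp [Set.mem_preimage, hb]⟩
          rw [Set.mem_singleton_iff] at this
          exact this
        | true =>
          have := h1 ⟨hx, by simp [Set.mem_preimage, hb]⟩
          rw [Set.mem_singleton_iff] at this
          exact this
    rw [hEq]
    exact (ContinuousMap.isOpen_setOf_mapsTo
        ((isCompact_Kset φ).inter_right ((isClosed_discrete _).preimage f.continuous))
        (isOpen_discrete _)).inter
      (ContinuousMap.isOpen_setOf_mapsTo
        ((isCompact_Kset φ).inter_right ((isClosed_discrete _).preimage f.continuous))
        (isOpen_discrete _))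
  have hfN : f ∈ N := fun x _ => rfl
  refine Filter.mem_of_superset (hNopen.mem_nhds hfN) ?_
  intro h hh hhA
  obtain ⟨nh, hnh⟩ := exists_tail h
  obtain ⟨nf, hnf⟩ := exists_tail f
  refine hgood (max nh nf) h hhA ⟨hh none (Or.inl rfl), ?_, ?_⟩
  · intro p hp
    rw [hnh p (le_trans (le_max_left _ _) hp), hnf p (le_trans (le_max_right _ _) hp)]
    exact hh none (Or.inl rfl)
  · intro p _ hle
    exact hh (some p) (Or.inr ⟨p, rfl, hle⟩)

end FanProof

theorem stmt9 : SequentialSpace C(Fan, Bool) := FanProof.main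
end

section
/- Let A ⊆ C_k(M,2) be a sequentially closed set of functions vanishing at ∞ with the constant zero function c₀ in cl(A) \ A, and let A_n = {f ∈ A : f(U(n)) = {0}}. Then there exists a sequence (k_n)_{n∈ω} such that for each n, every f ∈ A_{n+1} takes the value 1 at some point of ⋃_{i≤n} {i} × k_i. -/
open Filter Topology

instance : Countable Fan := inferInstanceAs (Countable (Option (ℕ × ℕ)))

lemma isOpen_some (p : ℕ × ℕ) : IsOpen ({some p} : Set Fan) :=
  TopologicalSpace.GenerateOpen.basic _ (Or.inl ⟨p, rfl⟩)

lemma isOpen_fanU (n : ℕ) : IsOpen (fanU n) :=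
  TopologicalSpace.GenerateOpen.basic _ (Or.inr ⟨n, rfl⟩)

lemma none_mem_fanU (n : ℕ) : (none : Fan) ∈ fanU n := Or.inl rfl

lemma isOpen_of_none_notMem {S : Set Fan} (h : (none : Fan) ∉ S) : IsOpen S := by
  have : S = ⋃ x ∈ S, {x} := by simp
  rw [this]
  refine isOpen_biUnion fun x hx => ?_
  cases x with
  | none => exact absurd hx h
  | some p => exact isOpen_some p

lemma fan_continuous {g : Fan → Bool} (N : ℕ) (h : ∀ x ∈ fanU N, g x = false) :
    Continuous g := by
  rw [continuous_def]
  intro s _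
  by_cases hf : false ∈ s
  · have hsub : fanU N ⊆ g ⁻¹' s := fun x hx => by
      simp only [Set.mem_preimage, h x hx]; exact hf
    have : g ⁻¹' s = fanU N ∪ (g ⁻¹' s \ {(none : Fan)}) := by
      apply Set.Subset.antisymm
      · intro x hx
        cases x with
        | none => exact Or.inl (none_mem_fanU N)
        | some p => exact Or.inr ⟨hx, fun h => Option.some_ne_none p (Set.mem_singleton_iff.mp h)⟩
      · exact Set.union_subset hsub (fun x hx => hx.1)
    rw [this]
    exact (isOpen_fanU N).union (isOpen_of_none_notMem (fun hx => hx.2 (Set.mem_singleton _)))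
  · apply isOpen_of_none_notMem
    intro hx
    have hx : g none ∈ s := hx; rw [h none (none_mem_fanU N)] at hx
    exact hf hx

lemma compact_finite_low {C : Set Fan} (hC : IsCompact C) (n : ℕ) :
    (C \ fanU (n + 1)).Finite := by
  have hclosed : IsClosed (fanU (n+1))ᶜ := (isOpen_fanU (n+1)).isClosed_compl
  have hcpt : IsCompact (C \ fanU (n+1)) := hC.inter_right hclosed
  have hcover : C \ fanU (n+1) ⊆ ⋃ p : ℕ × ℕ, ({some p} : Set Fan) := by
    intro x hx
    cases x with
    | none => exact absurd (none_mem_fanU (n+1)) hx.2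
    | some p => exact Set.mem_iUnion.2 ⟨p, rfl⟩
  obtain ⟨t, ht⟩ := hcpt.elim_finite_subcover _ (fun p => isOpen_some p) hcover
  exact Set.Finite.subset (t.finite_toSet.biUnion fun p _ => Set.finite_singleton _) ht

theorem stmt10 (A : Set C(Fan, Bool)) (c0 : C(Fan, Bool))
    (hc0 : ∀ x, c0 x = false)
    (hseq : IsSeqClosed A)
    (hvanish : ∀ f ∈ A, f none = false)
    (hcl : c0 ∈ closure A \ A) :
    ∃ k : ℕ → ℕ, ∀ n : ℕ,
      ∀ f ∈ {f ∈ A | ∀ x ∈ fanU (n + 1), f x = false},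
        ∃ i ≤ n, ∃ j < k i, f (some (i, j)) = true := by
  classical
  -- Q k m : the desired property at level m
  set Q : (ℕ → ℕ) → ℕ → Prop := fun k m =>
    ∀ f ∈ A, (∀ x ∈ fanU (m + 1), f x = false) →
      ∃ i ≤ m, ∃ j < k i, f (some (i, j)) = true with hQ
  set R : ℕ → (ℕ → ℕ) → ℕ → Prop := fun n prev K =>
    ∀ f ∈ A, (∀ x ∈ fanU (n + 1), f x = false) →
      (∀ i < n, ∀ j < prev i, f (some (i, j)) = false) →
      ∃ j < K, f (some (n, j)) = true with hR
  -- the key step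
  have step2 : ∀ (n : ℕ) (prev : ℕ → ℕ), ∃ K, (∀ m < n, Q prev m) → R n prev K := by
    intro n prev
    by_contra hcon
    push_neg at hcon
    have Hq : ∀ m < n, Q prev m := (hcon 0).1
    have hex : ∀ K : ℕ, ∃ f ∈ A, (∀ x ∈ fanU (n + 1), f x = false) ∧
        (∀ i < n, ∀ j < prev i, f (some (i, j)) = false) ∧
        (∀ j < K, f (some (n, j)) = false) := by
      intro K
      have := (hcon K).2
      simp only [hR] at this
      push_neg at this
      obtain ⟨f, hfA, hvan, hmiss, hcol⟩ := this
      exact ⟨f, hfA, hvan, hmiss, fun j hj => by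
        have := hcol j hj; simpa using this⟩
    choose F hFA hFvan hFmiss hFcol using hex
    -- extract a pointwise convergent subsequence
    have hcpt : IsCompact (Set.univ : Set (Fan → Bool)) := isCompact_univ
    obtain ⟨g, -, φ, hφ, hconv⟩ :=
      hcpt.tendsto_subseq (x := fun K => ⇑(F K)) (fun K => Set.mem_univ _)
    have hpt : ∀ x, Tendsto (fun m => F (φ m) x) atTop (𝓝 (g x)) := by
      intro x
      exact (tendsto_pi_nhds.mp hconv) x
    have hevEq : ∀ x c, (∀ᶠ m in atTop, F (φ m) x = c) → g x = c := by
      intro x c hev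
      exact tendsto_nhds_unique (hpt x) (Tendsto.congr' (hev.mono fun m h => h.symm)
        tendsto_const_nhds)
    have gU : ∀ x ∈ fanU (n + 1), g x = false := fun x hx =>
      hevEq x false (Eventually.of_forall fun m => hFvan (φ m) x hx)
    have gmiss : ∀ i < n, ∀ j < prev i, g (some (i, j)) = false := fun i hi j hj =>
      hevEq _ false (Eventually.of_forall fun m => hFmiss (φ m) i hi j hj)
    have gcol : ∀ j, g (some (n, j)) = false := by
      intro j
      refine hevEq _ false (eventually_atTop.2 ⟨j + 1, fun m hm => ?_⟩)
      exact hFcol (φ m) j (lt_of_lt_of_le (Nat.lt_of_succ_le hm) (hφ.le_apply))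
    set G : C(Fan, Bool) := ⟨g, fan_continuous (n + 1) gU⟩ with hG
    -- convergence in the compact-open topology
    have hconvC : Tendsto (fun m => F (φ m)) atTop (𝓝 G) := by
      rw [ContinuousMap.tendsto_nhds_compactOpen]
      intro C hC U hU hGU
      have hfin := compact_finite_low hC n
      have hev : ∀ᶠ m in atTop, ∀ x ∈ C \ fanU (n + 1), F (φ m) x = g x := by
        rw [Filter.eventually_all_finite hfin]
        intro x _
        have : {g x} ∈ 𝓝 (g x) := IsOpen.mem_nhds (isOpen_discrete _) rfl
        exact (hpt x).eventually (eventually_of_mem this fun b hb => hb)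
      refine hev.mono fun m hm x hx => ?_
      show F (φ m) x ∈ U
      have heq : F (φ m) x = g x := by
        by_cases hxU : x ∈ fanU (n + 1)
        · rw [hFvan (φ m) x hxU, gU x hxU]
        · exact hm x ⟨hx, hxU⟩
      rw [heq]
      exact hGU hx
    have hGA : G ∈ A := hseq (fun m => hFA (φ m)) hconvC
    -- derive the contradiction
    cases n with
    | zero =>
      have : G = c0 := by
        ext x
        rw [hc0]
        cases x with
        | none => exact gU none (none_mem_fanU 1)
        | some p =>
          rcases Nat.eq_zero_or_pos p.1 with h0 | h1
          · have : p = (0, p.2) := by ext <;> simp [h0]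
            rw [show (some p : Fan) = some (0, p.2) by rw [← this]]
            exact gcol p.2
          · exact gU (some p) (Or.inr ⟨p, rfl, h1⟩)
      rw [this] at hGA
      exact hcl.2 hGA
    | succ m =>
      have hQm : Q prev m := Hq m (Nat.lt_succ_self m)
      have hvanG : ∀ x ∈ fanU (m + 1), G x = false := by
        intro x hx
        rcases hx with h | ⟨p, rfl, hp⟩
        · subst h; exact gU none (none_mem_fanU _)
        · rcases lt_or_ge p.1 (m + 2) with h2 | h2
          · have : p.1 = m + 1 := le_antisymm (Nat.lt_succ_iff.mp h2) hp
            have hp2 : p = (m + 1, p.2) := by ext <;> simp [this]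
            rw [show (some p : Fan) = some (m + 1, p.2) by rw [← hp2]]
            exact gcol p.2
          · exact gU (some p) (Or.inr ⟨p, rfl, h2⟩)
      obtain ⟨i, hi, j, hj, htrue⟩ := hQm G hGA hvanG
      have := gmiss i (Nat.lt_succ_of_le hi) j hj
      have h2 : g (some (i, j)) = true := htrue
      rw [this] at h2
      exact Bool.noConfusion h2
  -- build k by recursion
  set ks : ℕ → (ℕ → ℕ) := fun n => Nat.rec (fun _ => 0)
    (fun n prev => Function.update prev n (Classical.choose (step2 n prev))) n with hks
  set k : ℕ → ℕ := fun n => ks (n + 1) n with hk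
  have hksucc : ∀ n, ks (n + 1) = Function.update (ks n) n (Classical.choose (step2 n (ks n))) :=
    fun n => rfl
  have agree : ∀ n i, i < n → ks n i = k i := by
    intro n
    induction n with
    | zero => intro i hi; omega
    | succ n ih =>
      intro i hi
      rcases Nat.lt_succ_iff_lt_or_eq.mp hi with h | h
      · rw [hksucc, Function.update_of_ne (Nat.ne_of_lt h)]
        exact ih i h
      · subst h; rfl
  have hkval : ∀ n, k n = Classical.choose (step2 n (ks n)) := by
    intro n
    have h0 : k n = ks (n + 1) n := rfl
    rw [h0, hksucc, Function.update_self]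
  -- the main induction
  have main : ∀ n, Q k n := by
    intro n
    induction n using Nat.strong_induction_on with
    | _ n ih =>
      intro f hfA hvan
      by_cases hmiss : ∀ i < n, ∀ j < k i, f (some (i, j)) = false
      · have hprevQ : ∀ m < n, Q (ks n) m := by
          intro m hm f' hf'A hvan'
          obtain ⟨i, hi, j, hj, ht⟩ := ih m hm f' hf'A hvan'
          refine ⟨i, hi, j, ?_, ht⟩
          rwa [agree n i (lt_of_le_of_lt hi hm)]
        have hRn : R n (ks n) (k n) := by
          rw [hkval n]
          exact Classical.choose_spec (step2 n (ks n)) hprevQ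
        obtain ⟨j, hj, ht⟩ := hRn f hfA hvan (fun i hi j hj =>
          hmiss i hi j (agree n i hi ▸ hj))
        exact ⟨n, le_refl n, j, hj, ht⟩
      · push_neg at hmiss
        obtain ⟨i, hi, j, hj, ht⟩ := hmiss
        exact ⟨i, le_of_lt hi, j, hj, by simpa using ht⟩
  exact ⟨k, fun n f hf => main n f hf.1 hf.2⟩
end

section
/- For a zero-dimensional first countable topological space X, the space C_k(X,2) of continuous {0,1}-valued functions with the compact-open topology is metrizable if and only if X is locally compact and σ-compact. -/
open Filter Set Topology TopologicalSpace

theorem stmt11 {X : Type*} [TopologicalSpace X] [FirstCountableTopology X]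
    (hzd : ∀ (x : X) (U : Set X), IsOpen U → x ∈ U →
      ∃ V : Set X, IsClopen V ∧ x ∈ V ∧ V ⊆ U) :
    TopologicalSpace.MetrizableSpace C(X, Bool) ↔
      (WeaklyLocallyCompactSpace X ∧ SigmaCompactSpace X) := by
  constructor
  · intro hm
    haveI := hm
    set z : C(X, Bool) := ContinuousMap.const X false with hzdef
    -- From any neighborhood of the zero function we can extract a "vanishing set" nbhd
    have hext : ∀ N ∈ 𝓝 z, ∃ K : Set X, IsCompact K ∧
        {g : C(X, Bool) | ∀ x ∈ K, g x = false} ⊆ N := by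
      intro N hN
      rw [UniformSpace.mem_nhds_iff] at hN
      obtain ⟨V, hV, hVN⟩ := hN
      rw [ContinuousMap.mem_compactConvergence_entourage_iff] at hV
      obtain ⟨K, W, hK, hW, hsub⟩ := hV
      refine ⟨K, hK, fun g hg => hVN (hsub fun x hx => ?_)⟩
      have hz : z x = false := rfl
      show (z x, g x) ∈ W
      rw [hz, hg x hx]
      exact refl_mem_uniformity hW
    -- conversely, each vanishing set is a neighborhood of zero
    have hMopen : ∀ K : Set X, IsCompact K →
        {g : C(X, Bool) | ∀ x ∈ K, g x = false} ∈ 𝓝 z := by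
      intro K hK
      have heq : {g : C(X, Bool) | ∀ x ∈ K, g x = false}
          = {g : C(X, Bool) | Set.MapsTo g K {false}} := by
        ext g; simp [Set.MapsTo]
      rw [heq]
      exact (ContinuousMap.isOpen_setOf_mapsTo hK (isOpen_discrete _)).mem_nhds
        (fun x hx => rfl)
    obtain ⟨B, hB⟩ := (𝓝 z).exists_antitone_basis
    choose L hLcomp hLsub using fun n => hext (B n) (hB.toHasBasis.mem_of_mem trivial)
    -- the "clopen hull" of L n
    set S : ℕ → Set X := fun n =>
      {x | ∀ V : Set X, IsClopen V → x ∈ V → (V ∩ L n).Nonempty} with hSdef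
    have hLS : ∀ n, L n ⊆ S n := fun n x hx V _ hxV => ⟨x, hxV, hx⟩
    -- every compact set lies in some S n
    have hcof : ∀ K : Set X, IsCompact K → ∃ n, K ⊆ S n := by
      intro K hK
      obtain ⟨n, -, hn⟩ := hB.toHasBasis.mem_iff.mp (hMopen K hK)
      refine ⟨n, fun x hxK V hV hxV => ?_⟩
      by_contra hne
      rw [Set.not_nonempty_iff_eq_empty] at hne
      have hcont : Continuous V.boolIndicator :=
        (continuous_boolIndicator_iff_isClopen V).mpr hV
      have hf : (⟨V.boolIndicator, hcont⟩ : C(X, Bool)) ∈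
          {g : C(X, Bool) | ∀ x ∈ L n, g x = false} := by
        intro y hy
        have hyV : y ∉ V := fun hyV =>
          Set.eq_empty_iff_forall_notMem.mp hne y ⟨hyV, hy⟩
        exact (Set.notMem_iff_boolIndicator _ _).mp hyV
      have hfx := hn (hLsub n hf) x hxK
      rw [show (⟨V.boolIndicator, hcont⟩ : C(X, Bool)) x = V.boolIndicator x from rfl,
        (Set.mem_iff_boolIndicator _ _).mp hxV] at hfx
      exact Bool.true_eq_false_eq_False hfx
    -- each S n is compact
    have hScomp : ∀ n, IsCompact (S n) := by
      intro n
      classical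
      refine isCompact_of_finite_subcover fun {ι} U hUo hcov => ?_
      have hLcov : L n ⊆ ⋃ i, U i := (hLS n).trans hcov
      have hLc2 : L n ⊆ ⋃ p : {p : Set X × ι // IsClopen p.1 ∧ p.1 ⊆ U p.2}, p.1.1 := by
        intro x hx
        obtain ⟨i, hi⟩ := Set.mem_iUnion.mp (hLcov hx)
        obtain ⟨V, hVc, hxV, hVU⟩ := hzd x (U i) (hUo i) hi
        exact Set.mem_iUnion.mpr ⟨⟨(V, i), hVc, hVU⟩, hxV⟩
      obtain ⟨t, ht⟩ := (hLcomp n).elim_finite_subcover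
        (fun p : {p : Set X × ι // IsClopen p.1 ∧ p.1 ⊆ U p.2} => p.1.1)
        (fun p => p.2.1.isOpen) hLc2
      have hWclopen : IsClopen (⋃ p ∈ t, (p : {p : Set X × ι // IsClopen p.1 ∧ p.1 ⊆ U p.2}).1.1) :=
        isClopen_biUnion_finset fun p _ => p.2.1
      have hSW : S n ⊆ ⋃ p ∈ t, (p : {p : Set X × ι // IsClopen p.1 ∧ p.1 ⊆ U p.2}).1.1 := by
        intro y hy
        by_contra hyW
        obtain ⟨w, hw1, hw2⟩ := hy _ hWclopen.compl hyW
        exact hw1 (ht hw2)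
      refine ⟨t.image fun p => (p : {p : Set X × ι // IsClopen p.1 ∧ p.1 ⊆ U p.2}).1.2,
        fun y hy => ?_⟩
      obtain ⟨p, hp⟩ := Set.mem_iUnion.mp (hSW hy)
      obtain ⟨hpt, hyp⟩ := Set.mem_iUnion.mp hp
      exact Set.mem_biUnion (Finset.mem_image_of_mem _ hpt) (p.2.2 hyp)
    constructor
    · constructor
      intro x
      by_contra hx
      push_neg at hx
      obtain ⟨U, hU⟩ := (𝓝 x).exists_antitone_basis
      have hsel : ∀ n, ∃ y, y ∈ U n ∧ y ∉ Set.accumulate S n := by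
        intro n
        by_contra h
        push_neg at h
        exact hx _ (isCompact_accumulate hScomp n)
          (Filter.mem_of_superset (hU.toHasBasis.mem_of_mem trivial) h)
      choose y hyU hyS using hsel
      have hten : Filter.Tendsto y Filter.atTop (𝓝 x) := hU.tendsto hyU
      obtain ⟨n, hn⟩ := hcof _ hten.isCompact_insert_range
      exact hyS n (Set.subset_accumulate (hn (Set.mem_insert_iff.mpr (Or.inr ⟨n, rfl⟩))))
    · refine ⟨⟨S, hScomp, ?_⟩⟩
      refine Set.eq_univ_of_forall fun x => Set.mem_iUnion.mpr ?_
      obtain ⟨n, hn⟩ := hcof {x} isCompact_singleton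
      exact ⟨n, hn rfl⟩
  · rintro ⟨h1, h2⟩
    infer_instance
end

section
/- If (X_i)_{i∈ω} is a countable family of topological spaces none of which is compact, then the product Π_{i∈ω} X_i is not σ-compact. -/
theorem stmt12 {X : ℕ → Type*} [∀ i, TopologicalSpace (X i)]
    (h : ∀ i, ¬ CompactSpace (X i)) :
    ¬ SigmaCompactSpace (∀ i, X i) := by
  intro hs
  have hne : ∀ i, Nonempty (X i) := by
    intro i
    by_contra hn
    have : IsEmpty (X i) := not_nonempty_iff.mp hn
    exact h i inferInstance
  set K := compactCovering (∀ i, X i) with hKdef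
  have hcomp : ∀ n, IsCompact (K n) := isCompact_compactCovering _
  have hx : ∀ n, ∃ x : X n, x ∉ (fun f : ∀ i, X i => f n) '' (K n) := by
    intro n
    by_contra hxx
    push_neg at hxx
    apply h n
    rw [← isCompact_univ_iff]
    have he : (fun f : ∀ i, X i => f n) '' (K n) = Set.univ :=
      Set.eq_univ_of_forall hxx
    rw [← he]
    exact (hcomp n).image (continuous_apply n)
  choose x hxp using hx
  have hcov := iUnion_compactCovering (∀ i, X i)
  have hmem : x ∈ ⋃ n, K n := hcov ▸ Set.mem_univ x
  obtain ⟨n, hn⟩ := Set.mem_iUnion.mp hmem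
  exact hxp n ⟨x, hn, rfl⟩
end
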